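/- arXiv:1707.01750 — 5 statements merged into one kernel-verified Lean document; each statement's English description precedes it below -/
import Mathlib

section
/- Bound energy is subadditive under tensor products: for density matrices ρ_A, ρ_B on systems with Hamiltonians H_A, H_B, and the joint Hamiltonian H_A ⊗ I + I ⊗ H_B, one has B(ρ_A ⊗ ρ_B) ≤ B(ρ_A) + B(ρ_B). -/
open Matrix BigOperators
open scoped ComplexOrder

noncomputable section

variable {n : Type*} [Fintype n] [DecidableEq n]

/-- A density matrix: positive semidefinite with unit trace. -/
def IsDensity (ρ : Matrix n n ℂ) : Prop := ρ.PosSemidef ∧ ρ.trace = 1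

/-- Von Neumann entropy via eigenvalues. -/
noncomputable def vnEntropy (ρ : Matrix n n ℂ) : ℝ :=
  if h : ρ.IsHermitian then ∑ i, Real.negMulLog (h.eigenvalues i) else 0

/-- Energy of a state with respect to a Hamiltonian. -/
noncomputable def energy (H ρ : Matrix n n ℂ) : ℝ := ((H * ρ).trace).re

/-- Gibbs state at inverse temperature β. -/
noncomputable def gibbs (H : Matrix n n ℂ) (β : ℝ) : Matrix n n ℂ :=
  ((NormedSpace.exp (-(β : ℂ) • H)).trace)⁻¹ • NormedSpace.exp (-(β : ℂ) • H)

/-- Bound energy: minimal energy among density matrices with the same entropy. -/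
noncomputable def boundEnergy (H ρ : Matrix n n ℂ) : ℝ :=
  sInf {e | ∃ σ : Matrix n n ℂ, IsDensity σ ∧ vnEntropy σ = vnEntropy ρ ∧ energy H σ = e}

/-- Free energy. -/
noncomputable def freeEnergy (H ρ : Matrix n n ℂ) : ℝ := energy H ρ - boundEnergy H ρ

/-- Matrix logarithm of a Hermitian matrix via spectral decomposition. -/
noncomputable def mlog (A : Matrix n n ℂ) : Matrix n n ℂ :=
  if h : A.IsHermitian then
    (h.eigenvectorUnitary : Matrix n n ℂ) *
      Matrix.diagonal (fun i => (Real.log (h.eigenvalues i) : ℂ)) *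
      star (h.eigenvectorUnitary : Matrix n n ℂ)
  else 0

/-- Quantum relative entropy D(ρ‖σ) = Tr(ρ log ρ - ρ log σ). -/
noncomputable def relEntropy (ρ σ : Matrix n n ℂ) : ℝ :=
  ((ρ * (mlog ρ - mlog σ)).trace).re

/-- Partial trace over the second factor. -/
noncomputable def margA {nA nB : Type*} [Fintype nA] [Fintype nB]
    (ρ : Matrix (nA × nB) (nA × nB) ℂ) : Matrix nA nA ℂ :=
  fun i i' => ∑ j, ρ (i, j) (i', j)

/-- Partial trace over the first factor. -/
noncomputable def margB {nA nB : Type*} [Fintype nA] [Fintype nB]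
    (ρ : Matrix (nA × nB) (nA × nB) ℂ) : Matrix nB nB ℂ :=
  fun j j' => ∑ i, ρ (i, j) (i, j')

/-! ### Auxiliary lemmas -/

namespace BEAux

open Polynomial Kronecker

set_option linter.unusedSectionVars false

variable {m : Type*} [Fintype m] [DecidableEq m]

lemma charpoly_conj_unitary (W D : Matrix m m ℂ) (hW : W * star W = 1) :
    (W * D * star W).charpoly = D.charpoly := by
  classical
  set f := (Polynomial.C : ℂ →+* ℂ[X]).mapMatrix (m := m) with hf
  have hf1 : f W * f (star W) = 1 := by rw [← _root_.map_mul, hW, _root_.map_one]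
  have hcomm : f W * (Matrix.scalar m (X : ℂ[X])) = (Matrix.scalar m (X : ℂ[X])) * f W :=
    (Matrix.scalar_commute (X : ℂ[X]) (fun r => Commute.all _ r) (f W)).symm
  have key : charmatrix (W * D * star W) = f W * charmatrix D * f (star W) := by
    unfold charmatrix
    rw [mul_sub, sub_mul]
    congr 1
    · rw [hcomm, mul_assoc, hf1, mul_one]
    · simp only [hf, RingHom.mapMatrix_apply]
      rw [← Matrix.map_mul, ← Matrix.map_mul]
  rw [Matrix.charpoly, Matrix.charpoly, key, det_mul, det_mul]
  have h2 : (f W).det * (f (star W)).det = 1 := by rw [← det_mul, hf1, det_one]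
  calc (f W).det * (charmatrix D).det * (f (star W)).det
      = (charmatrix D).det * ((f W).det * (f (star W)).det) := by ring
    _ = (charmatrix D).det := by rw [h2, mul_one]

lemma charpoly_diag (d : m → ℂ) :
    (Matrix.diagonal d).charpoly = ∏ i, ((X : ℂ[X]) - C (d i)) := by
  classical
  have h : charmatrix (Matrix.diagonal d) =
      Matrix.diagonal (fun i => (X : ℂ[X]) - C (d i)) := by
    ext i j
    by_cases h : i = j
    · subst h; simp
    · simp [Matrix.charpoly, charmatrix_apply_ne _ _ _ h, Matrix.diagonal_apply_ne _ h]
  rw [Matrix.charpoly, h, det_diagonal]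

lemma roots_prod_fun (v : m → ℂ) :
    (∏ i, ((X : ℂ[X]) - C (v i))).roots = Finset.univ.val.map v := by
  classical
  rw [Finset.prod_eq_multiset_prod]
  have : Multiset.map (fun i => (X : ℂ[X]) - C (v i)) Finset.univ.val
      = Multiset.map (fun a => (X : ℂ[X]) - C a) (Finset.univ.val.map v) := by
    rw [Multiset.map_map]; rfl
  rw [this, Polynomial.roots_multiset_prod_X_sub_C]

lemma eigenvalues_multiset {M : Matrix m m ℂ} (hM : M.IsHermitian)
    (W : Matrix m m ℂ) (d : m → ℝ) (hW : W * star W = 1)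
    (hdec : M = W * Matrix.diagonal (fun i => ((d i : ℝ) : ℂ)) * star W) :
    Finset.univ.val.map hM.eigenvalues = Finset.univ.val.map d := by
  have hU : (hM.eigenvectorUnitary : Matrix m m ℂ) *
      star (hM.eigenvectorUnitary : Matrix m m ℂ) = 1 :=
    (Matrix.mem_unitaryGroup_iff).mp (hM.eigenvectorUnitary).2
  have h1 : M.charpoly = ∏ i, ((X : ℂ[X]) - C ((hM.eigenvalues i : ℝ) : ℂ)) := by
    conv_lhs => rw [hM.spectral_theorem, Unitary.conjStarAlgAut_apply]
    rw [charpoly_conj_unitary _ _ hU, charpoly_diag]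
    rfl
  have h2 : M.charpoly = ∏ i, ((X : ℂ[X]) - C ((d i : ℝ) : ℂ)) := by
    conv_lhs => rw [hdec]
    rw [charpoly_conj_unitary _ _ hW]
    exact charpoly_diag _
  have h3 : Finset.univ.val.map (fun i => ((hM.eigenvalues i : ℝ) : ℂ))
      = Finset.univ.val.map (fun i => ((d i : ℝ) : ℂ)) := by
    rw [← roots_prod_fun, ← roots_prod_fun, ← h1, ← h2]
  calc Finset.univ.val.map hM.eigenvalues
      = (Finset.univ.val.map (fun i => ((hM.eigenvalues i : ℝ) : ℂ))).map Complex.re := by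
        rw [Multiset.map_map]; rfl
    _ = (Finset.univ.val.map (fun i => ((d i : ℝ) : ℂ))).map Complex.re := by rw [h3]
    _ = Finset.univ.val.map d := by rw [Multiset.map_map]; rfl

lemma vnEntropy_of_decomp {M : Matrix m m ℂ} (hM : M.IsHermitian)
    (W : Matrix m m ℂ) (d : m → ℝ) (hW : W * star W = 1)
    (hdec : M = W * Matrix.diagonal (fun i => ((d i : ℝ) : ℂ)) * star W) :
    vnEntropy M = ∑ i, Real.negMulLog (d i) := by
  rw [vnEntropy, dif_pos hM]
  have h := eigenvalues_multiset hM W d hW hdec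
  calc ∑ i, Real.negMulLog (hM.eigenvalues i)
      = ((Finset.univ.val.map hM.eigenvalues).map Real.negMulLog).sum := by
        rw [Multiset.map_map]; rfl
    _ = ((Finset.univ.val.map d).map Real.negMulLog).sum := by rw [h]
    _ = ∑ i, Real.negMulLog (d i) := by rw [Multiset.map_map]; rfl

lemma sum_eigenvalues_eq_one {M : Matrix m m ℂ} (hM : M.IsHermitian)
    (htr : M.trace = 1) : ∑ i, hM.eigenvalues i = 1 := by
  have hU : star (hM.eigenvectorUnitary : Matrix m m ℂ) *
      (hM.eigenvectorUnitary : Matrix m m ℂ) = 1 :=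
    (Matrix.mem_unitaryGroup_iff').mp (hM.eigenvectorUnitary).2
  have h : M.trace = ∑ i, ((hM.eigenvalues i : ℝ) : ℂ) := by
    conv_lhs => rw [hM.spectral_theorem, Unitary.conjStarAlgAut_apply]
    rw [Matrix.trace_mul_comm, ← mul_assoc, hU, one_mul, Matrix.trace_diagonal]
    rfl
  rw [htr] at h
  have h' := h.symm
  rw [← Complex.ofReal_sum] at h'
  exact_mod_cast h'

lemma kron_conjTranspose {l m p q : Type*} (A : Matrix l m ℂ) (B : Matrix p q ℂ) :
    (A ⊗ₖ B)ᴴ = Aᴴ ⊗ₖ Bᴴ := by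
  ext ⟨i, j⟩ ⟨k, l⟩
  simp [Matrix.conjTranspose_apply, Matrix.kroneckerMap_apply, mul_comm]

lemma psd_eq_conjTranspose_mul_self {m : Type*} [Fintype m] {A : Matrix m m ℂ}
    (h : A.PosSemidef) : ∃ B : Matrix m m ℂ, A = Bᴴ * B := by
  classical
  open scoped MatrixOrder Matrix.Norms.L2Operator in
  exact CStarAlgebra.nonneg_iff_eq_star_mul_self.mp h.nonneg

lemma kron_density {mA mB : Type*} [Fintype mA] [Fintype mB]
    {ρA : Matrix mA mA ℂ} {ρB : Matrix mB mB ℂ}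
    (hA : IsDensity ρA) (hB : IsDensity ρB) : IsDensity (ρA ⊗ₖ ρB) := by
  constructor
  · obtain ⟨B, hBe⟩ := psd_eq_conjTranspose_mul_self hA.1
    obtain ⟨C, hCe⟩ := psd_eq_conjTranspose_mul_self hB.1
    rw [hBe, hCe, Matrix.mul_kronecker_mul, ← kron_conjTranspose]
    exact Matrix.posSemidef_conjTranspose_mul_self _
  · rw [Matrix.trace_kronecker, hA.2, hB.2, mul_one]

lemma energy_kron_add {mA mB : Type*} [Fintype mA] [Fintype mB] [DecidableEq mA] [DecidableEq mB]
    (HA : Matrix mA mA ℂ) (HB : Matrix mB mB ℂ)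
    {σA : Matrix mA mA ℂ} {σB : Matrix mB mB ℂ}
    (hA : σA.trace = 1) (hB : σB.trace = 1) :
    energy (HA ⊗ₖ (1 : Matrix mB mB ℂ) + (1 : Matrix mA mA ℂ) ⊗ₖ HB) (σA ⊗ₖ σB)
      = energy HA σA + energy HB σB := by
  unfold energy
  rw [add_mul, ← Matrix.mul_kronecker_mul, ← Matrix.mul_kronecker_mul]
  simp only [Matrix.one_mul, Matrix.mul_one]
  rw [Matrix.trace_add, Matrix.trace_kronecker, Matrix.trace_kronecker, hB, hA,
    mul_one, one_mul, Complex.add_re]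

lemma vnEntropy_kron {mA mB : Type*} [Fintype mA] [Fintype mB] [DecidableEq mA] [DecidableEq mB]
    {σA : Matrix mA mA ℂ} {σB : Matrix mB mB ℂ}
    (hA : IsDensity σA) (hB : IsDensity σB) :
    vnEntropy (σA ⊗ₖ σB) = vnEntropy σA + vnEntropy σB := by
  have hAh : σA.IsHermitian := hA.1.1
  have hBh : σB.IsHermitian := hB.1.1
  set UA := (hAh.eigenvectorUnitary : Matrix mA mA ℂ) with hUA
  set UB := (hBh.eigenvectorUnitary : Matrix mB mB ℂ) with hUB
  set a := hAh.eigenvalues with ha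
  set b := hBh.eigenvalues with hb
  have hUA1 : UA * star UA = 1 := (Matrix.mem_unitaryGroup_iff).mp (hAh.eigenvectorUnitary).2
  have hUB1 : UB * star UB = 1 := (Matrix.mem_unitaryGroup_iff).mp (hBh.eigenvectorUnitary).2
  have hW : (UA ⊗ₖ UB) * star (UA ⊗ₖ UB) = 1 := by
    rw [Matrix.star_eq_conjTranspose, kron_conjTranspose, ← Matrix.mul_kronecker_mul,
      ← Matrix.star_eq_conjTranspose, ← Matrix.star_eq_conjTranspose, hUA1, hUB1,
      Matrix.one_kronecker_one]
  have hkronHerm : (σA ⊗ₖ σB).IsHermitian := by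
    show (σA ⊗ₖ σB)ᴴ = σA ⊗ₖ σB
    rw [kron_conjTranspose, hAh.eq, hBh.eq]
  have hstar : star (UA ⊗ₖ UB) = star UA ⊗ₖ star UB := by
    rw [Matrix.star_eq_conjTranspose, kron_conjTranspose,
      ← Matrix.star_eq_conjTranspose UA, ← Matrix.star_eq_conjTranspose UB]
  have hdec : σA ⊗ₖ σB = (UA ⊗ₖ UB) *
      Matrix.diagonal (fun p : mA × mB => (((a p.1 * b p.2 : ℝ) : ℂ))) * star (UA ⊗ₖ UB) := by
    conv_lhs => rw [hAh.spectral_theorem, hBh.spectral_theorem, Unitary.conjStarAlgAut_apply,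
      Unitary.conjStarAlgAut_apply]
    rw [Matrix.mul_kronecker_mul, Matrix.mul_kronecker_mul, Matrix.diagonal_kronecker_diagonal,
      hstar]
    congr 2
    funext p
    push_cast
    rfl
  have hsa : ∑ i, a i = 1 := sum_eigenvalues_eq_one hAh hA.2
  have hsb : ∑ j, b j = 1 := sum_eigenvalues_eq_one hBh hB.2
  rw [vnEntropy_of_decomp hkronHerm _ _ hW hdec]
  have hEA : vnEntropy σA = ∑ i, Real.negMulLog (a i) := by rw [vnEntropy, dif_pos hAh]
  have hEB : vnEntropy σB = ∑ j, Real.negMulLog (b j) := by rw [vnEntropy, dif_pos hBh]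
  rw [hEA, hEB, Fintype.sum_prod_type]
  have : ∀ i, ∑ j, Real.negMulLog (a i * b j)
      = (∑ j, b j) * Real.negMulLog (a i) + a i * ∑ j, Real.negMulLog (b j) := by
    intro i
    rw [Finset.mul_sum, Finset.sum_mul, ← Finset.sum_add_distrib]
    exact Finset.sum_congr rfl fun j _ => Real.negMulLog_mul _ _
  simp only [this, hsb, one_mul]
  rw [Finset.sum_add_distrib, ← Finset.sum_mul, hsa, one_mul]

lemma density_entry_bound {m : Type*} [Fintype m] {σ : Matrix m m ℂ}
    (hσ : IsDensity σ) (i j : m) : ‖σ i j‖ ≤ 1 := by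
  obtain ⟨B, hBe⟩ := psd_eq_conjTranspose_mul_self hσ.1
  set c : m → ℝ := fun j => ∑ k, Complex.normSq (B k j) with hc
  have hdiag : ∀ j, σ j j = ((c j : ℝ) : ℂ) := by
    intro j
    rw [hBe, Matrix.mul_apply]
    push_cast [hc]
    refine Finset.sum_congr rfl fun k _ => ?_
    rw [Matrix.conjTranspose_apply]
    exact (Complex.normSq_eq_conj_mul_self).symm
  have hcnn : ∀ j, 0 ≤ c j := fun j => Finset.sum_nonneg fun k _ => Complex.normSq_nonneg _
  have hsum : ∑ j, c j = 1 := by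
    have h : σ.trace = ((∑ j, c j : ℝ) : ℂ) := by
      rw [Matrix.trace]
      push_cast
      exact Finset.sum_congr rfl fun j _ => hdiag j
    rw [hσ.2] at h
    exact_mod_cast h.symm
  have hcle : ∀ j, c j ≤ 1 := by
    intro j
    rw [← hsum]
    exact Finset.single_le_sum (fun k _ => hcnn k) (Finset.mem_univ j)
  have hb : ‖σ i j‖ ≤ (c i + c j) / 2 := by
    rw [hBe, Matrix.mul_apply]
    refine le_trans (norm_sum_le _ _) ?_
    have : ∀ k, ‖Bᴴ i k * B k j‖
        ≤ (Complex.normSq (B k i) + Complex.normSq (B k j)) / 2 := by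
      intro k
      rw [norm_mul, Matrix.conjTranspose_apply,
        show (star (B k i)) = (starRingEnd ℂ) (B k i) from rfl, Complex.norm_conj,
        Complex.normSq_eq_norm_sq, Complex.normSq_eq_norm_sq]
      nlinarith [norm_nonneg (B k i), norm_nonneg (B k j),
        sq_nonneg (‖B k i‖ - ‖B k j‖)]
    refine le_trans (Finset.sum_le_sum fun k _ => this k) ?_
    rw [hc, ← Finset.sum_div, ← Finset.sum_add_distrib]
  have hfin : (c i + c j) / 2 ≤ 1 := by
    have := hcle i; have := hcle j; linarith
  linarith

lemma energy_lower_bound {m : Type*} [Fintype m] (H : Matrix m m ℂ) {σ : Matrix m m ℂ}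
    (hσ : IsDensity σ) :
    -(∑ p : m, ∑ q : m, ‖H p q‖) ≤ energy H σ := by
  have h1 : |energy H σ| ≤ ∑ p : m, ∑ q : m, ‖H p q‖ := by
    refine le_trans (Complex.abs_re_le_norm _) ?_
    rw [Matrix.trace]
    refine le_trans (norm_sum_le _ _) ?_
    refine Finset.sum_le_sum fun p _ => ?_
    rw [Matrix.diag_apply, Matrix.mul_apply]
    refine le_trans (norm_sum_le _ _) ?_
    refine Finset.sum_le_sum fun q _ => ?_
    rw [norm_mul]
    calc ‖H p q‖ * ‖σ q p‖
        ≤ ‖H p q‖ * 1 :=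
          mul_le_mul_of_nonneg_left (density_entry_bound hσ q p) (norm_nonneg _)
      _ = ‖H p q‖ := mul_one _
  have h2 := abs_le.mp h1
  linarith [h2.1]

end BEAux

open Kronecker in
/-- Bound energy is subadditive under tensor products:
B(ρ_A ⊗ ρ_B) ≤ B(ρ_A) + B(ρ_B) for the non-interacting joint Hamiltonian. -/
theorem boundEnergy_subadditive {dA dB : ℕ}
    (HA : Matrix (Fin dA) (Fin dA) ℂ) (HB : Matrix (Fin dB) (Fin dB) ℂ)
    (hA : HA.IsHermitian) (hB : HB.IsHermitian)
    (ρA : Matrix (Fin dA) (Fin dA) ℂ) (hρA : IsDensity ρA)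
    (ρB : Matrix (Fin dB) (Fin dB) ℂ) (hρB : IsDensity ρB) :
    boundEnergy (HA ⊗ₖ (1 : Matrix (Fin dB) (Fin dB) ℂ)
        + (1 : Matrix (Fin dA) (Fin dA) ℂ) ⊗ₖ HB) (ρA ⊗ₖ ρB)
      ≤ boundEnergy HA ρA + boundEnergy HB ρB := by
  classical
  set H : Matrix (Fin dA × Fin dB) (Fin dA × Fin dB) ℂ :=
    HA ⊗ₖ (1 : Matrix (Fin dB) (Fin dB) ℂ) + (1 : Matrix (Fin dA) (Fin dA) ℂ) ⊗ₖ HB with hH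
  set SA := {e | ∃ σ : Matrix (Fin dA) (Fin dA) ℂ,
    IsDensity σ ∧ vnEntropy σ = vnEntropy ρA ∧ energy HA σ = e} with hSA
  set SB := {e | ∃ σ : Matrix (Fin dB) (Fin dB) ℂ,
    IsDensity σ ∧ vnEntropy σ = vnEntropy ρB ∧ energy HB σ = e} with hSB
  set SAB := {e | ∃ σ : Matrix (Fin dA × Fin dB) (Fin dA × Fin dB) ℂ,
    IsDensity σ ∧ vnEntropy σ = vnEntropy (ρA ⊗ₖ ρB) ∧ energy H σ = e} with hSAB
  have hgoal : boundEnergy H (ρA ⊗ₖ ρB) = sInf SAB := rfl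
  have hgA : boundEnergy HA ρA = sInf SA := rfl
  have hgB : boundEnergy HB ρB = sInf SB := rfl
  rw [hgoal, hgA, hgB]
  have hSA_ne : SA.Nonempty := ⟨energy HA ρA, ρA, hρA, rfl, rfl⟩
  have hSB_ne : SB.Nonempty := ⟨energy HB ρB, ρB, hρB, rfl, rfl⟩
  have hbdd : BddBelow SAB := by
    refine ⟨-(∑ p : Fin dA × Fin dB, ∑ q : Fin dA × Fin dB, ‖H p q‖), ?_⟩
    rintro e ⟨σ, hσ, -, rfl⟩
    exact BEAux.energy_lower_bound H hσ
  have key : ∀ a ∈ SA, ∀ b ∈ SB, sInf SAB ≤ a + b := by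
    rintro a ⟨σA, hσA, hEA, rfl⟩ b ⟨σB, hσB, hEB, rfl⟩
    refine csInf_le hbdd ⟨σA ⊗ₖ σB, BEAux.kron_density hσA hσB, ?_,
      BEAux.energy_kron_add HA HB hσA.2 hσB.2⟩
    rw [BEAux.vnEntropy_kron hσA hσB, BEAux.vnEntropy_kron hρA hρB, hEA, hEB]
  have h1 : ∀ a ∈ SA, sInf SAB - a ≤ sInf SB :=
    fun a ha => le_csInf hSB_ne fun b hb => by linarith [key a ha b hb]
  have h2 : sInf SAB - sInf SB ≤ sInf SA :=
    le_csInf hSA_ne fun a ha => by linarith [h1 a ha]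
  linarith

end
end

section
/- The free energy can be written in terms of relative entropy: for any density matrix ρ with Hamiltonian H, F(ρ) = T(ρ) · D(ρ ‖ γ(ρ)), where γ(ρ) is the Gibbs state with the same entropy as ρ, T(ρ) = 1/β(ρ) is its intrinsic temperature, and D is quantum relative entropy. -/
open Matrix BigOperators
open scoped ComplexOrder

noncomputable section

variable {n : Type*} [Fintype n] [DecidableEq n]

/-- Conjugation by a unitary is multiplicative. -/
lemma my_conj_mul (U A B : Matrix n n ℂ) (hU : star U * U = 1) :
    (U * A * star U) * (U * B * star U) = U * (A * B) * star U := by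
  calc (U * A * star U) * (U * B * star U)
      = U * A * (star U * U) * (B * star U) := by simp only [mul_assoc]
    _ = U * (A * B) * star U := by rw [hU, mul_one]; simp only [mul_assoc]

lemma my_smul_conj (U D : Matrix n n ℂ) (c : ℂ) :
    c • (U * D * star U) = U * (c • D) * star U := by
  rw [← smul_mul_assoc, ← mul_smul_comm]

lemma my_smul_diag (c : ℂ) (v : n → ℂ) :
    c • diagonal v = diagonal (fun i => c * v i) := by
  rw [← diagonal_smul]
  congr 1

lemma my_trace_conj (U M : Matrix n n ℂ) (hU : star U * U = 1) :
    (U * M * star U).trace = M.trace := by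
  rw [trace_mul_cycle, hU, one_mul]

/-- Trace of σ · log σ equals the (negated) entropy, for Hermitian σ. -/
lemma my_trace_mul_mlog (σ : Matrix n n ℂ) (hσ : σ.IsHermitian) :
    ((σ * mlog σ).trace).re = - vnEntropy σ := by
  have hU : star (hσ.eigenvectorUnitary : Matrix n n ℂ) *
      (hσ.eigenvectorUnitary : Matrix n n ℂ) = 1 :=
    (Matrix.mem_unitaryGroup_iff').mp hσ.eigenvectorUnitary.2
  have h1 : σ * mlog σ =
      (hσ.eigenvectorUnitary : Matrix n n ℂ) *
        (diagonal (RCLike.ofReal ∘ hσ.eigenvalues) *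
          diagonal (fun i => (Real.log (hσ.eigenvalues i) : ℂ))) *
        star (hσ.eigenvectorUnitary : Matrix n n ℂ) := by
    have hs := hσ.spectral_theorem
    rw [Unitary.conjStarAlgAut_apply] at hs
    rw [mlog, dif_pos hσ, ← my_conj_mul _ _ _ hU, ← hs]
  rw [h1, my_trace_conj _ _ hU, diagonal_mul_diagonal, trace_diagonal]
  rw [vnEntropy, dif_pos hσ, ← Finset.sum_neg_distrib, Complex.re_sum]
  refine Finset.sum_congr rfl fun i _ => ?_
  have : (RCLike.ofReal : ℝ → ℂ) = Complex.ofReal := rfl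
  rw [Function.comp_apply, this, ← Complex.ofReal_mul, Complex.ofReal_re, Real.negMulLog]
  ring

set_option maxHeartbeats 1600000 in
open Kronecker in
/-- Free energy in terms of relative entropy:
F(ρ) = T(ρ) · D(ρ‖γ(ρ)) with T(ρ) = 1/β(ρ) the intrinsic temperature. -/
theorem freeEnergy_eq_temp_mul_relEntropy {d : ℕ} (H : Matrix (Fin d) (Fin d) ℂ)
    (hH : H.IsHermitian) (ρ : Matrix (Fin d) (Fin d) ℂ) (hρ : IsDensity ρ)
    (h0 : 0 < vnEntropy ρ) (h1 : vnEntropy ρ < Real.log d)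
    (β : ℝ) (hβpos : 0 < β) (hβ : vnEntropy (gibbs H β) = vnEntropy ρ) :
    energy H ρ - energy H (gibbs H β) = (1 / β) * relEntropy ρ (gibbs H β) := by
  classical
  have hd : Nonempty (Fin d) := by
    rcases Nat.eq_zero_or_pos d with h | h
    · exfalso; subst h; simp [vnEntropy] at h0
    · exact Fin.pos_iff_nonempty.mp h
  set U : Matrix (Fin d) (Fin d) ℂ := (hH.eigenvectorUnitary : Matrix (Fin d) (Fin d) ℂ)
    with hUdef
  set μ : Fin d → ℝ := hH.eigenvalues with hμdef
  have hU1 : U * star U = 1 := (Matrix.mem_unitaryGroup_iff).mp hH.eigenvectorUnitary.2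
  have hU2 : star U * U = 1 := (Matrix.mem_unitaryGroup_iff').mp hH.eigenvectorUnitary.2
  have hUunit : IsUnit U := isUnit_iff_exists.mpr ⟨star U, hU1, hU2⟩
  have hUinv : U⁻¹ = star U := Matrix.inv_eq_left_inv hU2
  set Z : ℝ := ∑ i, Real.exp (-(β * μ i)) with hZdef
  have hZpos : 0 < Z := Finset.sum_pos (fun i _ => Real.exp_pos _) Finset.univ_nonempty
  have hZ0 : Z ≠ 0 := ne_of_gt hZpos
  -- the exponential of -βH
  have hsmul : -(β : ℂ) • H = U * diagonal (fun i => ((-(β * μ i) : ℝ) : ℂ)) * star U := by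
    conv_lhs => rw [hH.spectral_theorem, Unitary.conjStarAlgAut_apply]
    rw [← hUdef, ← hμdef, my_smul_conj, my_smul_diag]
    congr 1
    funext i
    have hc : (RCLike.ofReal : ℝ → ℂ) = Complex.ofReal := rfl
    simp only [Function.comp_apply, hc]
    push_cast
    ring
  have hexp : NormedSpace.exp (-(β : ℂ) • H) =
      U * diagonal (fun i => ((Real.exp (-(β * μ i)) : ℝ) : ℂ)) * star U := by
    have hv : NormedSpace.exp (fun i => ((-(β * μ i) : ℝ) : ℂ)) =
        fun i : Fin d => ((Real.exp (-(β * μ i)) : ℝ) : ℂ) := by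
      funext i
      rw [Pi.coe_exp, ← Complex.exp_eq_exp_ℂ, Complex.ofReal_exp]
    rw [hsmul, ← hUinv, Matrix.exp_conj U _ hUunit, Matrix.exp_diagonal, hv, hUinv]
  have htraceexp : (NormedSpace.exp (-(β : ℂ) • H)).trace = (Z : ℂ) := by
    rw [hexp, my_trace_conj _ _ hU2, trace_diagonal, hZdef, Complex.ofReal_sum]
  -- the Gibbs state in explicit diagonal form
  set f : ℝ → ℝ := fun x => Real.exp (-(β * x)) / Z with hfdef
  have hgibbs : gibbs H β = U * diagonal (fun i => ((f (μ i) : ℝ) : ℂ)) * star U := by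
    rw [gibbs, htraceexp, hexp, my_smul_conj, my_smul_diag]
    have harg : (fun i : Fin d => ((Z : ℂ))⁻¹ * ((Real.exp (-(β * μ i)) : ℝ) : ℂ)) =
        fun i : Fin d => ((f (μ i) : ℝ) : ℂ) := by
      funext i
      simp only [hfdef]
      push_cast
      ring
    rw [harg]
  have hfcont : Continuous f := by
    apply Continuous.div_const
    exact Real.continuous_exp.comp (by continuity)
  -- gibbs H β = cfc f H
  have hselfH : IsSelfAdjoint H := hH
  have hcfc : gibbs H β = cfc f H := by
    rw [hH.cfc_eq f, Matrix.IsHermitian.cfc, hgibbs]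
    rfl
  have hgherm : (gibbs H β).IsHermitian := by
    rw [hcfc]
    exact cfc_predicate f H
  -- compute mlog of the Gibbs state via cfc composition
  have hmlogg : mlog (gibbs H β) = (-(β : ℂ)) • H - ((Real.log Z : ℝ) : ℂ) • 1 := by
    have h1 : mlog (gibbs H β) = cfc Real.log (gibbs H β) := by
      rw [hgherm.cfc_eq Real.log, Matrix.IsHermitian.cfc, mlog, dif_pos hgherm]
      rfl
    have hg' : ContinuousOn Real.log (f '' spectrum ℝ H) := by
      intro x hx
      obtain ⟨y, -, rfl⟩ := hx
      exact (Real.continuousAt_log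
        (ne_of_gt (div_pos (Real.exp_pos _) hZpos))).continuousWithinAt
    have h2 : cfc Real.log (gibbs H β) = cfc (Real.log ∘ f) H := by
      rw [hcfc]
      exact (cfc_comp Real.log f H hselfH hg' hfcont.continuousOn).symm
    have h3 : (Real.log ∘ f) = fun x => -(β * x) - Real.log Z := by
      funext x
      simp only [Function.comp, hfdef]
      rw [Real.log_div (Real.exp_ne_zero _) hZ0, Real.log_exp]
    have h4 : cfc (fun x => -(β * x) - Real.log Z) H =
        (-(β : ℂ)) • H - ((Real.log Z : ℝ) : ℂ) • 1 := by
      rw [hH.cfc_eq, Matrix.IsHermitian.cfc, Unitary.conjStarAlgAut_apply]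
      have e1 : (-(β : ℂ)) • H - ((Real.log Z : ℝ) : ℂ) • (1 : Matrix (Fin d) (Fin d) ℂ)
          = U * (diagonal (fun i => ((-(β * μ i) : ℝ) : ℂ))
              - ((Real.log Z : ℝ) : ℂ) • 1) * star U := by
        rw [mul_sub, sub_mul, ← hsmul]
        congr 1
        rw [← my_smul_conj, mul_one, hU1]
      have harg : (RCLike.ofReal ∘ (fun x => -(β * x) - Real.log Z) ∘ μ : Fin d → ℂ)
          = fun i => ((-(β * μ i) : ℝ) : ℂ) - ((Real.log Z : ℝ) : ℂ) := by
        funext i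
        have hc : (RCLike.ofReal : ℝ → ℂ) = Complex.ofReal := rfl
        simp only [Function.comp_apply, hc]
        push_cast
        ring
      have hd2 : diagonal (fun i : Fin d => ((-(β * μ i) : ℝ) : ℂ) - ((Real.log Z : ℝ) : ℂ))
          = diagonal (fun i : Fin d => ((-(β * μ i) : ℝ) : ℂ))
            - ((Real.log Z : ℝ) : ℂ) • 1 := by
        rw [← Matrix.diagonal_one, ← diagonal_smul, diagonal_sub]
        congr 1
        funext i
        simp
      rw [e1, harg, hd2]
    rw [h1, h2, h3, h4]
  -- trace of gibbs is 1
  have htrg : (gibbs H β).trace = 1 := by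
    have hsum : ∑ i, f (μ i) = 1 := by
      simp only [hfdef]
      rw [← Finset.sum_div, ← hZdef, div_self hZ0]
    rw [hgibbs, my_trace_conj _ _ hU2, trace_diagonal, ← Complex.ofReal_sum, hsum,
      Complex.ofReal_one]
  -- the key linear-in-energy expansion of Tr(σ · mlog g)
  have key : ∀ σ : Matrix (Fin d) (Fin d) ℂ, σ.trace = 1 →
      ((σ * mlog (gibbs H β)).trace).re = -(β * energy H σ) - Real.log Z := by
    intro σ hσtr
    rw [hmlogg, mul_sub, trace_sub, mul_smul_comm, mul_smul_comm, trace_smul, trace_smul,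
      mul_one, hσtr, trace_mul_comm]
    simp [energy, Complex.ext_iff]
  -- relative entropy of ρ with the Gibbs state
  have hρherm : ρ.IsHermitian := hρ.1.1
  have hrel : relEntropy ρ (gibbs H β) =
      -vnEntropy ρ + β * energy H ρ + Real.log Z := by
    rw [relEntropy, mul_sub, trace_sub, Complex.sub_re,
      my_trace_mul_mlog ρ hρherm, key ρ hρ.2]
    ring
  -- entropy-energy relation for the Gibbs state itself
  have hgg : vnEntropy (gibbs H β) = β * energy H (gibbs H β) + Real.log Z := by
    have := my_trace_mul_mlog (gibbs H β) hgherm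
    have h2 := key (gibbs H β) htrg
    -- Tr(g · mlog g) computed two ways
    rw [this] at h2
    linarith
  rw [hrel]
  have hEg : energy H (gibbs H β) = (vnEntropy ρ - Real.log Z) / β := by
    rw [← hβ]
    field_simp
    linarith
  rw [hEg]
  field_simp
  ring

end
end

section
/- Free energy as worst-case β-free-energy difference: F(ρ) = min over β > 0 of [F_β(ρ) - F_β(γ(β))], where F_β(σ) = E(σ) - β^{-1} S(σ) and γ(β) is the Gibbs state at inverse temperature β. The minimum is attained at the intrinsic inverse temperature β(ρ). -/
open Matrix BigOperators
open scoped ComplexOrder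

noncomputable section

variable {n : Type*} [Fintype n] [DecidableEq n]

section AuxProof

open Polynomial in
lemma aux_charpoly_diag {d : ℕ} (v : Fin d → ℂ) :
    (Matrix.diagonal v).charpoly = ∏ i, (X - C (v i)) := by
  unfold Matrix.charpoly
  have : Matrix.charmatrix (Matrix.diagonal v)
      = Matrix.diagonal (fun i => (X:ℂ[X]) - C (v i)) := by
    ext i j
    by_cases h : i = j
    · subst h; simp
    · simp [Matrix.charmatrix_apply_ne _ _ _ h, Matrix.diagonal_apply_ne _ h]
  rw [this, Matrix.det_diagonal]

open Polynomial in
lemma aux_charpoly_unitary_conj {d : ℕ} (U : Matrix.unitaryGroup (Fin d) ℂ)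
    (A : Matrix (Fin d) (Fin d) ℂ) :
    ((U : Matrix (Fin d) (Fin d) ℂ) * A * star (U : Matrix (Fin d) (Fin d) ℂ)).charpoly
      = A.charpoly := by
  set V := (U : Matrix (Fin d) (Fin d) ℂ)
  have hU : V * star V = 1 := (Matrix.mem_unitaryGroup_iff).mp U.2
  have hU' : star V * V = 1 := (Matrix.mem_unitaryGroup_iff').mp U.2
  unfold Matrix.charpoly
  have hm : Matrix.charmatrix (V * A * star V)
      = (C : ℂ →+* ℂ[X]).mapMatrix V * Matrix.charmatrix A
          * (C : ℂ →+* ℂ[X]).mapMatrix (star V) := by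
    unfold Matrix.charmatrix
    rw [mul_sub, sub_mul, _root_.map_mul, _root_.map_mul]
    congr 1
    rw [← (Matrix.scalar_commute (X : ℂ[X]) (fun r => Commute.all _ _)
      ((C : ℂ →+* ℂ[X]).mapMatrix V)).eq, mul_assoc, ← _root_.map_mul, hU,
      _root_.map_one, mul_one]
  have hdet : (V.map (C : ℂ →+* ℂ[X])).det * ((star V).map (C : ℂ →+* ℂ[X])).det = 1 := by
    rw [← Matrix.det_mul, ← Matrix.map_mul, hU]
    simp
  rw [hm, Matrix.det_mul, Matrix.det_mul, RingHom.mapMatrix_apply, RingHom.mapMatrix_apply,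
    mul_right_comm, hdet, one_mul]

open Polynomial in
lemma aux_eig_multiset {d : ℕ} {M : Matrix (Fin d) (Fin d) ℂ} (hM : M.IsHermitian)
    (U : Matrix.unitaryGroup (Fin d) ℂ) (c : Fin d → ℝ)
    (hrep : M = (U : Matrix (Fin d) (Fin d) ℂ) * Matrix.diagonal (fun i => (c i : ℂ))
      * star (U : Matrix (Fin d) (Fin d) ℂ)) :
    Multiset.map hM.eigenvalues Finset.univ.val = Multiset.map c Finset.univ.val := by
  have key : ∀ v : Fin d → ℂ, (∏ i, (X - C (v i))).roots = Finset.univ.val.map v := by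
    intro v
    have h := Polynomial.roots_multiset_prod_X_sub_C (Finset.univ.val.map v)
    rw [Multiset.map_map] at h
    rw [Finset.prod_eq_multiset_prod]
    exact h
  have h1 : M.charpoly = ∏ i, (X - C ((c i : ℂ))) := by
    rw [hrep, aux_charpoly_unitary_conj, aux_charpoly_diag]
  have h2 : M.charpoly = ∏ i, (X - C ((hM.eigenvalues i : ℂ))) := by
    conv_lhs => rw [hM.spectral_theorem, Unitary.conjStarAlgAut_apply]
    rw [aux_charpoly_unitary_conj, aux_charpoly_diag]
    simp [Function.comp]
  have h3 : Finset.univ.val.map (fun i => ((c i : ℂ))) =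
      Finset.univ.val.map (fun i => ((hM.eigenvalues i : ℂ))) := by
    rw [← key, ← key, ← h1, ← h2]
  apply Multiset.map_injective (f := (Complex.ofReal : ℝ → ℂ)) Complex.ofReal_injective
  rw [Multiset.map_map, Multiset.map_map]
  exact h3.symm

lemma aux_sum_comp_eig {d : ℕ} {M : Matrix (Fin d) (Fin d) ℂ} (hM : M.IsHermitian)
    (U : Matrix.unitaryGroup (Fin d) ℂ) (c : Fin d → ℝ)
    (hrep : M = (U : Matrix (Fin d) (Fin d) ℂ) * Matrix.diagonal (fun i => (c i : ℂ))
      * star (U : Matrix (Fin d) (Fin d) ℂ)) (f : ℝ → ℝ) :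
    ∑ i, f (hM.eigenvalues i) = ∑ i, f (c i) := by
  calc ∑ i, f (hM.eigenvalues i)
      = (Multiset.map f (Multiset.map hM.eigenvalues Finset.univ.val)).sum := by
        rw [Multiset.map_map, Finset.sum_eq_multiset_sum]; rfl
    _ = (Multiset.map f (Multiset.map c Finset.univ.val)).sum := by
        rw [aux_eig_multiset hM U c hrep]
    _ = ∑ i, f (c i) := by rw [Multiset.map_map, Finset.sum_eq_multiset_sum]; rfl

lemma aux_trace_conj {d : ℕ} (D : Matrix (Fin d) (Fin d) ℂ)
    (U : Matrix.unitaryGroup (Fin d) ℂ) :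
    ((U : Matrix (Fin d) (Fin d) ℂ) * D * star (U : Matrix (Fin d) (Fin d) ℂ)).trace
      = D.trace := by
  rw [Matrix.trace_mul_cycle, (Matrix.mem_unitaryGroup_iff').mp U.2, one_mul]

lemma aux_exp_smul_eq {d : ℕ} (H : Matrix (Fin d) (Fin d) ℂ) (hH : H.IsHermitian) (β : ℝ) :
    NormedSpace.exp (-(β : ℂ) • H) =
      (hH.eigenvectorUnitary : Matrix (Fin d) (Fin d) ℂ) *
        Matrix.diagonal (fun i => (Real.exp (-β * hH.eigenvalues i) : ℂ)) *
        star (hH.eigenvectorUnitary : Matrix (Fin d) (Fin d) ℂ) := by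
  set V := (hH.eigenvectorUnitary : Matrix (Fin d) (Fin d) ℂ) with hV
  have hU : V * star V = 1 := (Matrix.mem_unitaryGroup_iff).mp hH.eigenvectorUnitary.2
  have hU' : star V * V = 1 := (Matrix.mem_unitaryGroup_iff').mp hH.eigenvectorUnitary.2
  have hd : Matrix.diagonal (fun i => ((-β * hH.eigenvalues i : ℝ) : ℂ))
      = (-(β:ℂ)) • Matrix.diagonal (RCLike.ofReal ∘ hH.eigenvalues) := by
    have : (fun i => ((-β * hH.eigenvalues i : ℝ) : ℂ))
        = (-(β:ℂ)) • (RCLike.ofReal ∘ hH.eigenvalues) := by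
      funext i
      show ((-β * hH.eigenvalues i : ℝ) : ℂ) = (-(β:ℂ)) * ((hH.eigenvalues i : ℝ) : ℂ)
      push_cast
      ring
    rw [this, Matrix.diagonal_smul]
  have h1 : -(β : ℂ) • H
      = V * Matrix.diagonal (fun i => ((-β * hH.eigenvalues i : ℝ) : ℂ)) * star V := by
    conv_lhs => rw [hH.spectral_theorem, Unitary.conjStarAlgAut_apply]
    conv_rhs => rw [hd, mul_smul_comm, smul_mul_assoc]
  let u : (Matrix (Fin d) (Fin d) ℂ)ˣ := ⟨V, star V, hU, hU'⟩
  have hcoe : (↑u : Matrix (Fin d) (Fin d) ℂ) = V := rfl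
  have hcoeinv : (↑u⁻¹ : Matrix (Fin d) (Fin d) ℂ) = star V := rfl
  have hexp : NormedSpace.exp (fun i => ((-β * hH.eigenvalues i : ℝ) : ℂ))
      = fun i => ((Real.exp (-β * hH.eigenvalues i) : ℝ) : ℂ) := by
    rw [Pi.exp_def]
    funext i
    rw [← Complex.exp_eq_exp_ℂ, Complex.ofReal_exp]
  rw [h1, ← hcoe, ← hcoeinv, Matrix.exp_units_conj u, hcoe, hcoeinv,
    Matrix.exp_diagonal, hexp]

lemma aux_kl {ι : Type*} [Fintype ι] (p q : ι → ℝ) (hp : ∀ i, 0 < p i) (hq : ∀ i, 0 ≤ q i)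
    (hps : ∑ i, p i = 1) (hqs : ∑ i, q i = 1) :
    0 ≤ ∑ i, (q i * Real.log (q i) - q i * Real.log (p i)) := by
  have key : ∀ i, q i - p i ≤ q i * Real.log (q i) - q i * Real.log (p i) := by
    intro i
    rcases eq_or_lt_of_le (hq i) with h | h
    · rw [← h]
      simp
      linarith [(hp i).le]
    · have hlog := Real.log_le_sub_one_of_pos (div_pos (hp i) h)
      have hmul := mul_le_mul_of_nonneg_left hlog (le_of_lt h)
      rw [Real.log_div (hp i).ne' h.ne'] at hmul
      have hdd : q i * (p i / q i - 1) = p i - q i := by field_simp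
      nlinarith
  calc (0:ℝ) = ∑ i, (q i - p i) := by rw [Finset.sum_sub_distrib, hps, hqs]; ring
    _ ≤ _ := Finset.sum_le_sum (fun i _ => key i)

end AuxProof

section GibbsAux

variable {d : ℕ}

lemma aux_conj_diag_isHermitian (U : Matrix.unitaryGroup (Fin d) ℂ) (c : Fin d → ℝ) :
    ((U : Matrix (Fin d) (Fin d) ℂ) * Matrix.diagonal (fun i => ((c i : ℝ) : ℂ))
      * star (U : Matrix (Fin d) (Fin d) ℂ)).IsHermitian := by
  set V := (U : Matrix (Fin d) (Fin d) ℂ)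
  have hstar : (star fun i => ((c i : ℝ) : ℂ)) = fun i => ((c i : ℝ) : ℂ) := by
    funext i
    simp [Pi.star_apply, Complex.star_def, Complex.conj_ofReal]
  unfold Matrix.IsHermitian
  rw [Matrix.conjTranspose_mul, Matrix.conjTranspose_mul, Matrix.diagonal_conjTranspose, hstar]
  have h1 : (star V)ᴴ = V := by simp [Matrix.star_eq_conjTranspose]
  have h2 : Vᴴ = star V := rfl
  rw [h1, h2, mul_assoc]

lemma aux_energy_conj (U : Matrix.unitaryGroup (Fin d) ℂ) (a b : Fin d → ℝ) :
    energy ((U : Matrix (Fin d) (Fin d) ℂ) * Matrix.diagonal (fun i => ((a i : ℝ) : ℂ))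
        * star (U : Matrix (Fin d) (Fin d) ℂ))
      ((U : Matrix (Fin d) (Fin d) ℂ) * Matrix.diagonal (fun i => ((b i : ℝ) : ℂ))
        * star (U : Matrix (Fin d) (Fin d) ℂ)) = ∑ i, a i * b i := by
  set V := (U : Matrix (Fin d) (Fin d) ℂ)
  have hU' : star V * V = 1 := (Matrix.mem_unitaryGroup_iff').mp U.2
  set Da := Matrix.diagonal (fun i => ((a i : ℝ) : ℂ)) with hDa
  set Db := Matrix.diagonal (fun i => ((b i : ℝ) : ℂ)) with hDb
  have h1 : (V * Da * star V) * (V * Db * star V)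
      = V * Da * ((star V * V) * (Db * star V)) := by
    simp only [mul_assoc]
  have h2 : V * Da * (Db * star V) = V * (Da * Db) * star V := by
    simp only [mul_assoc]
  unfold energy
  rw [h1, hU', one_mul, h2, hDa, hDb, Matrix.diagonal_mul_diagonal, aux_trace_conj]
  have h3 : (Matrix.diagonal fun i => ((a i : ℝ) : ℂ) * ((b i : ℝ) : ℂ)).trace
      = ((∑ i, a i * b i : ℝ) : ℂ) := by
    rw [Matrix.trace_diagonal]
    push_cast
    rfl
  rw [h3, Complex.ofReal_re]

lemma aux_gibbs_repr (H : Matrix (Fin d) (Fin d) ℂ) (hH : H.IsHermitian) (β : ℝ)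
    [Nonempty (Fin d)] :
    gibbs H β = (hH.eigenvectorUnitary : Matrix (Fin d) (Fin d) ℂ) *
      Matrix.diagonal (fun i =>
        ((Real.exp (-β * hH.eigenvalues i) / ∑ j, Real.exp (-β * hH.eigenvalues j) : ℝ) : ℂ)) *
      star (hH.eigenvectorUnitary : Matrix (Fin d) (Fin d) ℂ) := by
  unfold gibbs
  rw [aux_exp_smul_eq H hH β, aux_trace_conj]
  have htr : (Matrix.diagonal (fun i => ((Real.exp (-β * hH.eigenvalues i) : ℝ) : ℂ))).trace
      = ((∑ j, Real.exp (-β * hH.eigenvalues j) : ℝ) : ℂ) := by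
    rw [Matrix.trace_diagonal]
    push_cast
    rfl
  have harg : (((∑ j, Real.exp (-β * hH.eigenvalues j) : ℝ) : ℂ))⁻¹
        • (fun i => ((Real.exp (-β * hH.eigenvalues i) : ℝ) : ℂ))
      = fun i =>
        ((Real.exp (-β * hH.eigenvalues i) / ∑ j, Real.exp (-β * hH.eigenvalues j) : ℝ) : ℂ) := by
    funext i
    show (((∑ j, Real.exp (-β * hH.eigenvalues j) : ℝ) : ℂ))⁻¹
        * ((Real.exp (-β * hH.eigenvalues i) : ℝ) : ℂ) = _
    push_cast
    ring
  rw [htr, ← smul_mul_assoc, ← mul_smul_comm, ← Matrix.diagonal_smul, harg]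

lemma aux_gibbs_isHermitian (H : Matrix (Fin d) (Fin d) ℂ) (hH : H.IsHermitian) (β : ℝ)
    [Nonempty (Fin d)] : (gibbs H β).IsHermitian := by
  rw [aux_gibbs_repr H hH β]
  exact aux_conj_diag_isHermitian hH.eigenvectorUnitary _

lemma aux_energy_gibbs (H : Matrix (Fin d) (Fin d) ℂ) (hH : H.IsHermitian) (β : ℝ)
    [Nonempty (Fin d)] :
    energy H (gibbs H β) = ∑ i, hH.eigenvalues i *
      (Real.exp (-β * hH.eigenvalues i) / ∑ j, Real.exp (-β * hH.eigenvalues j)) := by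
  have hspec : H = (hH.eigenvectorUnitary : Matrix (Fin d) (Fin d) ℂ) *
      Matrix.diagonal (fun i => ((hH.eigenvalues i : ℝ) : ℂ)) *
      star (hH.eigenvectorUnitary : Matrix (Fin d) (Fin d) ℂ) := hH.spectral_theorem
  have h := aux_energy_conj hH.eigenvectorUnitary hH.eigenvalues
    (fun i => Real.exp (-β * hH.eigenvalues i) / ∑ j, Real.exp (-β * hH.eigenvalues j))
  rw [← aux_gibbs_repr H hH β, ← hspec] at h
  exact h

lemma aux_entropy_gibbs (H : Matrix (Fin d) (Fin d) ℂ) (hH : H.IsHermitian) (β : ℝ)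
    [Nonempty (Fin d)] :
    vnEntropy (gibbs H β) = ∑ i, Real.negMulLog
      (Real.exp (-β * hH.eigenvalues i) / ∑ j, Real.exp (-β * hH.eigenvalues j)) := by
  have hherm := aux_gibbs_isHermitian H hH β
  unfold vnEntropy
  rw [dif_pos hherm]
  exact aux_sum_comp_eig hherm hH.eigenvectorUnitary _ (aux_gibbs_repr H hH β) Real.negMulLog

end GibbsAux

open Kronecker in
/-- F(ρ) = min over β > 0 of [F_β(ρ) - F_β(γ(β))], the minimum being
attained at the intrinsic inverse temperature β₀ = β(ρ), where
F_β(σ) = E(σ) - β⁻¹ S(σ) and F(ρ) = E(ρ) - B(ρ) with B(ρ) = E(γ(β₀)). -/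
theorem freeEnergy_min_over_beta {d : ℕ} (H : Matrix (Fin d) (Fin d) ℂ)
    (hH : H.IsHermitian) (ρ : Matrix (Fin d) (Fin d) ℂ) (hρ : IsDensity ρ)
    (h0 : 0 < vnEntropy ρ) (h1 : vnEntropy ρ < Real.log d)
    (β₀ : ℝ) (hβ₀ : 0 < β₀) (hβ₀S : vnEntropy (gibbs H β₀) = vnEntropy ρ) :
    IsLeast {x : ℝ | ∃ β : ℝ, 0 < β ∧
        x = (energy H ρ - β⁻¹ * vnEntropy ρ)
          - (energy H (gibbs H β) - β⁻¹ * vnEntropy (gibbs H β))}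
      (energy H ρ - energy H (gibbs H β₀)) ∧
    (energy H ρ - β₀⁻¹ * vnEntropy ρ)
        - (energy H (gibbs H β₀) - β₀⁻¹ * vnEntropy (gibbs H β₀))
      = energy H ρ - energy H (gibbs H β₀) := by
  have hd1 : (1:ℝ) < (d:ℝ) := by
    by_contra hcon
    push_neg at hcon
    exact absurd (h0.trans h1) (not_lt.2 (Real.log_nonpos (by positivity) hcon))
  have hd0 : 0 < d := by exact_mod_cast (lt_trans zero_lt_one hd1 : (0:ℝ) < (d:ℝ))
  haveI : Nonempty (Fin d) := Fin.pos_iff_nonempty.mp hd0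
  set lam := hH.eigenvalues with hlam
  set Z : ℝ → ℝ := fun β => ∑ i, Real.exp (-β * lam i) with hZdef
  set p : ℝ → Fin d → ℝ := fun β i => Real.exp (-β * lam i) / Z β with hpdef
  have hZ : ∀ β, 0 < Z β := fun β =>
    Finset.sum_pos (fun j _ => Real.exp_pos _) Finset.univ_nonempty
  have hp : ∀ β i, 0 < p β i := fun β i => div_pos (Real.exp_pos _) (hZ β)
  have hpsum : ∀ β, ∑ i, p β i = 1 := by
    intro β
    rw [hpdef]
    rw [← Finset.sum_div, div_self (hZ β).ne']
  have hE : ∀ β, energy H (gibbs H β) = ∑ i, lam i * p β i := fun β => aux_energy_gibbs H hH β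
  have hS : ∀ β, vnEntropy (gibbs H β) = ∑ i, Real.negMulLog (p β i) := fun β =>
    aux_entropy_gibbs H hH β
  have hlogp : ∀ β i, Real.log (p β i) = -β * lam i - Real.log (Z β) := by
    intro β i
    rw [hpdef]
    show Real.log (Real.exp (-β * lam i) / Z β) = _
    rw [Real.log_div (Real.exp_ne_zero _) (hZ β).ne', Real.log_exp]
  have hSE : ∀ β, vnEntropy (gibbs H β)
      = β * energy H (gibbs H β) + Real.log (Z β) := by
    intro β
    rw [hS, hE]
    calc ∑ i, Real.negMulLog (p β i)
        = ∑ i, (β * (lam i * p β i) + Real.log (Z β) * p β i) := by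
          refine Finset.sum_congr rfl (fun i _ => ?_)
          rw [Real.negMulLog, hlogp β i]
          ring
      _ = β * ∑ i, lam i * p β i + Real.log (Z β) * ∑ i, p β i := by
          rw [Finset.sum_add_distrib, Finset.mul_sum, Finset.mul_sum]
      _ = β * (∑ i, lam i * p β i) + Real.log (Z β) := by rw [hpsum]; ring
  -- The key inequality
  have hmain : ∀ β, 0 < β →
      energy H (gibbs H β) - β⁻¹ * vnEntropy (gibbs H β)
        ≤ energy H (gibbs H β₀) - β⁻¹ * vnEntropy (gibbs H β₀) := by
    intro β hβ
    have hKL := aux_kl (p β) (p β₀) (hp β) (fun i => (hp β₀ i).le) (hpsum β) (hpsum β₀)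
    have hcomb : ∑ i, (p β₀ i * Real.log (p β₀ i) - p β₀ i * Real.log (p β i))
        = -(∑ i, Real.negMulLog (p β₀ i)) + β * (∑ i, lam i * p β₀ i) + Real.log (Z β) := by
      calc ∑ i, (p β₀ i * Real.log (p β₀ i) - p β₀ i * Real.log (p β i))
          = ∑ i, (-(Real.negMulLog (p β₀ i)) + β * (lam i * p β₀ i)
              + Real.log (Z β) * p β₀ i) := by
            refine Finset.sum_congr rfl (fun i _ => ?_)
            rw [Real.negMulLog, hlogp β i]
            ring
        _ = -(∑ i, Real.negMulLog (p β₀ i)) + β * (∑ i, lam i * p β₀ i)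
              + Real.log (Z β) * ∑ i, p β₀ i := by
            rw [Finset.sum_add_distrib, Finset.sum_add_distrib, Finset.mul_sum, Finset.mul_sum,
              Finset.sum_neg_distrib]
        _ = _ := by rw [hpsum]; ring
    rw [hcomb] at hKL
    rw [hSE β, hE β₀, hS β₀]
    set S0 := ∑ i, Real.negMulLog (p β₀ i) with hS0
    set E0 := ∑ i, lam i * p β₀ i with hE0
    set A := energy H (gibbs H β) with hA
    set L := Real.log (Z β) with hL
    have hβinv : (0:ℝ) < β⁻¹ := inv_pos.mpr hβ
    have h3 := mul_nonneg hβinv.le hKL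
    have h2 : β⁻¹ * (-S0 + β * E0 + L) = -(β⁻¹ * S0) + E0 + β⁻¹ * L := by
      field_simp
    rw [h2] at h3
    have hLHS : A - β⁻¹ * (β * A + L) = -(β⁻¹ * L) := by
      field_simp
      ring
    linarith
  have hright : (energy H ρ - β₀⁻¹ * vnEntropy ρ)
      - (energy H (gibbs H β₀) - β₀⁻¹ * vnEntropy (gibbs H β₀))
      = energy H ρ - energy H (gibbs H β₀) := by
    rw [hβ₀S]; ring
  refine ⟨⟨⟨β₀, hβ₀, hright.symm⟩, ?_⟩, hright⟩
  rintro x ⟨β, hβ, rfl⟩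
  have := hmain β hβ
  rw [← hβ₀S]
  linarith

end
end

section
/- The intrinsic equilibration temperature is lower than the spontaneous equilibration temperature: for a non-thermal state ρ (with H non-degenerate and 0 < S(ρ) < log d), let β(ρ) be defined by S(γ(β(ρ))) = S(ρ) and β̃(ρ) by E(γ(β̃(ρ))) = E(ρ). Then β(ρ) > β̃(ρ), i.e., T(ρ) < T̃(ρ). -/
open Matrix BigOperators
open scoped ComplexOrder

noncomputable section

variable {n : Type*} [Fintype n] [DecidableEq n]

set_option linter.unusedSectionVars false

section Helpers

lemma unitary_row_sum {W : Matrix n n ℂ} (hW : W ∈ Matrix.unitaryGroup n ℂ) (i : n) :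
    ∑ j, Complex.normSq (W i j) = 1 := by
  have h := Matrix.mem_unitaryGroup_iff.mp hW
  have h2 : (W * star W) i i = (1 : Matrix n n ℂ) i i := by rw [h]
  rw [Matrix.mul_apply] at h2
  simp only [Matrix.one_apply_eq] at h2
  have h3 : ∑ j, (Complex.normSq (W i j) : ℂ) = 1 := by
    rw [← h2]
    refine Finset.sum_congr rfl fun j _ => ?_
    rw [Matrix.star_apply]
    exact (Complex.mul_conj _).symm
  exact_mod_cast h3

lemma unitary_col_sum {W : Matrix n n ℂ} (hW : W ∈ Matrix.unitaryGroup n ℂ) (j : n) :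
    ∑ i, Complex.normSq (W i j) = 1 := by
  have h := Matrix.mem_unitaryGroup_iff'.mp hW
  have h2 : (star W * W) j j = (1 : Matrix n n ℂ) j j := by rw [h]
  rw [Matrix.mul_apply] at h2
  simp only [Matrix.one_apply_eq] at h2
  have h3 : ∑ i, (Complex.normSq (W i j) : ℂ) = 1 := by
    rw [← h2]
    refine Finset.sum_congr rfl fun i _ => ?_
    rw [Matrix.star_apply]
    rw [mul_comm]
    exact (Complex.mul_conj _).symm
  exact_mod_cast h3

/-- If a Hermitian matrix has a unitary diagonalization with real entries `v`, then for any
function `f`, summing `f` over the eigenvalues equals summing `f` over `v`. -/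
lemma sum_f_eigenvalues {A : Matrix n n ℂ} (hA : A.IsHermitian) {M : Matrix n n ℂ}
    (hM : M ∈ Matrix.unitaryGroup n ℂ) (v : n → ℝ)
    (hAM : A = M * Matrix.diagonal (fun i => (v i : ℂ)) * star M) (f : ℝ → ℝ) :
    ∑ i, f (hA.eigenvalues i) = ∑ i, f (v i) := by
  set V : Matrix n n ℂ := (hA.eigenvectorUnitary : Matrix n n ℂ) with hV
  have hVmem : V ∈ Matrix.unitaryGroup n ℂ := (hA.eigenvectorUnitary).2
  set μ : n → ℝ := hA.eigenvalues with hμ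
  have hspec : A = V * Matrix.diagonal (fun i => (μ i : ℂ)) * star V := by
    have := hA.spectral_theorem
    simp only [Unitary.conjStarAlgAut_apply, Unitary.coe_star] at this
    exact this
  set W : Matrix n n ℂ := star V * M with hW
  have hWmem : W ∈ Matrix.unitaryGroup n ℂ :=
    Submonoid.mul_mem _ ((Unitary.star_mem_iff).mpr hVmem) hM
  -- key intertwining relation
  have key : Matrix.diagonal (fun i => (μ i : ℂ)) * W = W * Matrix.diagonal (fun i => (v i : ℂ)) := by
    have h1 : V * Matrix.diagonal (fun i => (μ i : ℂ)) * star V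
        = M * Matrix.diagonal (fun i => (v i : ℂ)) * star M := hspec.symm.trans hAM
    have h2 := congrArg (fun X => star V * X * M) h1
    calc Matrix.diagonal (fun i => (μ i : ℂ)) * W
        = (star V * V) * Matrix.diagonal (fun i => (μ i : ℂ)) * (star V * M) := by
          rw [Matrix.mem_unitaryGroup_iff'.mp hVmem, one_mul]
      _ = star V * (V * Matrix.diagonal (fun i => (μ i : ℂ)) * star V) * M := by
          simp only [mul_assoc]
      _ = star V * (M * Matrix.diagonal (fun i => (v i : ℂ)) * star M) * M := by rw [h1]
      _ = W * Matrix.diagonal (fun i => (v i : ℂ)) * (star M * M) := by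
          simp only [hW, mul_assoc]
      _ = W * Matrix.diagonal (fun i => (v i : ℂ)) := by
          rw [Matrix.mem_unitaryGroup_iff'.mp hM, mul_one]
  have hval : ∀ i j, W i j ≠ 0 → μ i = v j := by
    intro i j hij
    have h3 : (Matrix.diagonal (fun i => (μ i : ℂ)) * W) i j
        = (W * Matrix.diagonal (fun i => (v i : ℂ))) i j := by rw [key]
    rw [Matrix.diagonal_mul, Matrix.mul_diagonal] at h3
    have h4 : (μ i : ℂ) * W i j = (v j : ℂ) * W i j := by rw [h3, mul_comm]
    have : (μ i : ℂ) = (v j : ℂ) := mul_right_cancel₀ hij h4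
    exact_mod_cast this
  calc ∑ i, f (μ i) = ∑ i, (∑ j, Complex.normSq (W i j)) * f (μ i) := by
        refine Finset.sum_congr rfl fun i _ => ?_
        rw [unitary_row_sum hWmem, one_mul]
    _ = ∑ i, ∑ j, Complex.normSq (W i j) * f (μ i) := by
        simp_rw [Finset.sum_mul]
    _ = ∑ i, ∑ j, Complex.normSq (W i j) * f (v j) := by
        refine Finset.sum_congr rfl fun i _ => Finset.sum_congr rfl fun j _ => ?_
        by_cases h : W i j = 0
        · simp [h]
        · rw [hval i j h]
    _ = ∑ j, ∑ i, Complex.normSq (W i j) * f (v j) := Finset.sum_comm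
    _ = ∑ j, f (v j) := by
        refine Finset.sum_congr rfl fun j _ => ?_
        rw [← Finset.sum_mul, unitary_col_sum hWmem, one_mul]


/-- Scalar pointwise bound: `x - r ≤ x log x - x log r` for `x ≥ 0, r > 0`,
strict when `x ≠ r`. -/
lemma xlogx_bound {x r : ℝ} (hx : 0 ≤ x) (hr : 0 < r) :
    x - r ≤ x * Real.log x - x * Real.log r ∧
    (x ≠ r → x - r < x * Real.log x - x * Real.log r) := by
  rcases eq_or_lt_of_le hx with h0 | h0
  · constructor
    · simp [← h0]; linarith
    · intro _; simp [← h0]; linarith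
  · -- x > 0
    have hdiv : 0 < r / x := div_pos hr h0
    have hlog : Real.log (r / x) ≤ r / x - 1 := Real.log_le_sub_one_of_pos hdiv
    have hlogd : Real.log (r / x) = Real.log r - Real.log x := Real.log_div hr.ne' h0.ne'
    constructor
    · have := mul_le_mul_of_nonneg_left hlog (le_of_lt h0)
      rw [hlogd] at this
      have hx1 : x * (r / x - 1) = r - x := by field_simp
      nlinarith [this, hx1]
    · intro hne
      have hne1 : r / x ≠ 1 := by
        intro h; exact hne ((div_eq_one_iff_eq h0.ne').mp h).symm
      have hlt : Real.log (r / x) < r / x - 1 := Real.log_lt_sub_one_of_pos hdiv hne1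
      have := mul_lt_mul_of_pos_left hlt h0
      rw [hlogd] at this
      have hx1 : x * (r / x - 1) = r - x := by field_simp
      nlinarith [this, hx1]

/-- Klein's inequality equality case (classical form with doubly stochastic matrix `c`):
if `∑ p log p ≤ ∑∑ p c log q` then `c i j ≠ 0 → p i = q j`. -/
lemma klein_eq {p q : n → ℝ} {c : n → n → ℝ}
    (hp : ∀ i, 0 ≤ p i) (hq : ∀ j, 0 < q j) (hc : ∀ i j, 0 ≤ c i j)
    (hrow : ∀ i, ∑ j, c i j = 1) (hcol : ∀ j, ∑ i, c i j = 1)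
    (hp1 : ∑ i, p i = 1) (hq1 : ∑ j, q j = 1)
    (hD : ∑ i, p i * Real.log (p i) ≤ ∑ i, ∑ j, p i * c i j * Real.log (q j)) :
    ∀ i j, c i j ≠ 0 → p i = q j := by
  set r : n → ℝ := fun i => ∑ j, c i j * q j with hrdef
  have hrpos : ∀ i, 0 < r i := by
    intro i
    obtain ⟨j, _, hj⟩ := Finset.exists_ne_zero_of_sum_ne_zero
      ((hrow i).symm ▸ one_ne_zero : ∑ j, c i j ≠ 0)
    have hcij : 0 < c i j := lt_of_le_of_ne (hc i j) (Ne.symm hj)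
    have : 0 < c i j * q j := mul_pos hcij (hq j)
    calc (0:ℝ) < c i j * q j := this
      _ ≤ r i := Finset.single_le_sum (fun k _ => mul_nonneg (hc i k) (le_of_lt (hq k)))
          (Finset.mem_univ j)
  -- Jensen for log, weak and strict versions
  have jensen_term : ∀ i j, c i j * Real.log (q j) ≤ c i j * (Real.log (r i) + (q j / r i - 1)) := by
    intro i j
    refine mul_le_mul_of_nonneg_left ?_ (hc i j)
    have h1 : Real.log (q j) - Real.log (r i) = Real.log (q j / r i) :=
      (Real.log_div (hq j).ne' (hrpos i).ne').symm
    have h2 : Real.log (q j / r i) ≤ q j / r i - 1 :=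
      Real.log_le_sub_one_of_pos (div_pos (hq j) (hrpos i))
    linarith
  have jensen_sum : ∀ i, ∑ j, c i j * (Real.log (r i) + (q j / r i - 1)) = Real.log (r i) := by
    intro i
    have hri : ∑ j, c i j * q j = r i := rfl
    have step : ∑ j, c i j * (Real.log (r i) + (q j / r i - 1))
        = (∑ j, c i j) * Real.log (r i) + (∑ j, c i j * q j) / r i - (∑ j, c i j) := by
      have e1 : ∑ j, c i j * (q j / r i) = (∑ j, c i j * q j) / r i := by
        rw [Finset.sum_div]
        exact Finset.sum_congr rfl fun j _ => (mul_div_assoc _ _ _).symm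
      simp only [mul_add, mul_sub, mul_one]
      rw [Finset.sum_add_distrib, Finset.sum_sub_distrib, e1, ← Finset.sum_mul]
      ring
    rw [step, hrow i, hri, div_self (hrpos i).ne', one_mul]
    ring
  have jensen : ∀ i, ∑ j, c i j * Real.log (q j) ≤ Real.log (r i) := by
    intro i
    calc ∑ j, c i j * Real.log (q j) ≤ ∑ j, c i j * (Real.log (r i) + (q j / r i - 1)) :=
          Finset.sum_le_sum (fun j _ => jensen_term i j)
      _ = Real.log (r i) := jensen_sum i
  have jensen_strict : ∀ i j₀, c i j₀ ≠ 0 → q j₀ ≠ r i →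
      ∑ j, c i j * Real.log (q j) < Real.log (r i) := by
    intro i j₀ hc0 hqr
    have hlt : c i j₀ * Real.log (q j₀) < c i j₀ * (Real.log (r i) + (q j₀ / r i - 1)) := by
      refine mul_lt_mul_of_pos_left ?_ (lt_of_le_of_ne (hc i j₀) (Ne.symm hc0))
      have h1 : Real.log (q j₀) - Real.log (r i) = Real.log (q j₀ / r i) :=
        (Real.log_div (hq j₀).ne' (hrpos i).ne').symm
      have hne1 : q j₀ / r i ≠ 1 := by
        intro h; exact hqr ((div_eq_one_iff_eq (hrpos i).ne').mp h)
      have h2 : Real.log (q j₀ / r i) < q j₀ / r i - 1 :=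
        Real.log_lt_sub_one_of_pos (div_pos (hq j₀) (hrpos i)) hne1
      linarith
    calc ∑ j, c i j * Real.log (q j)
        < ∑ j, c i j * (Real.log (r i) + (q j / r i - 1)) :=
          Finset.sum_lt_sum (fun j _ => jensen_term i j) ⟨j₀, Finset.mem_univ j₀, hlt⟩
      _ = Real.log (r i) := jensen_sum i
  -- per-index terms
  set T : n → ℝ := fun i => p i * Real.log (p i) - ∑ j, p i * c i j * Real.log (q j) with hTdef
  have hTw : ∀ i, p i - r i ≤ T i := by
    intro i
    have h1 : ∑ j, p i * c i j * Real.log (q j) = p i * ∑ j, c i j * Real.log (q j) := by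
      rw [Finset.mul_sum]; exact Finset.sum_congr rfl fun j _ => by ring
    have h2 : p i * ∑ j, c i j * Real.log (q j) ≤ p i * Real.log (r i) :=
      mul_le_mul_of_nonneg_left (jensen i) (hp i)
    have h3 := (xlogx_bound (hp i) (hrpos i)).1
    simp only [hTdef, h1]
    linarith
  have hsumr : ∑ i, r i = 1 := by
    rw [hrdef]
    simp only
    rw [Finset.sum_comm]
    calc ∑ j, ∑ i, c i j * q j = ∑ j, (∑ i, c i j) * q j := by
          refine Finset.sum_congr rfl fun j _ => (Finset.sum_mul _ _ _).symm
      _ = ∑ j, q j := by refine Finset.sum_congr rfl fun j _ => by rw [hcol j, one_mul]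
      _ = 1 := hq1
  -- main conclusion by contradiction
  intro i₀ j₀ hc0
  by_contra hne
  have hTs : p i₀ - r i₀ < T i₀ := by
    by_cases hpr : p i₀ = r i₀
    · -- then q j₀ ≠ r i₀ and p i₀ > 0
      have hqr : q j₀ ≠ r i₀ := fun h => hne (by rw [hpr, ← h])
      have hppos : 0 < p i₀ := hpr ▸ hrpos i₀
      have h1 : ∑ j, p i₀ * c i₀ j * Real.log (q j) = p i₀ * ∑ j, c i₀ j * Real.log (q j) := by
        rw [Finset.mul_sum]; exact Finset.sum_congr rfl fun j _ => by ring
      have h2 : p i₀ * ∑ j, c i₀ j * Real.log (q j) < p i₀ * Real.log (r i₀) :=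
        mul_lt_mul_of_pos_left (jensen_strict i₀ j₀ hc0 hqr) hppos
      have h3 := (xlogx_bound (hp i₀) (hrpos i₀)).1
      simp only [hTdef, h1]
      linarith
    · have h1 : ∑ j, p i₀ * c i₀ j * Real.log (q j) = p i₀ * ∑ j, c i₀ j * Real.log (q j) := by
        rw [Finset.mul_sum]; exact Finset.sum_congr rfl fun j _ => by ring
      have h2 : p i₀ * ∑ j, c i₀ j * Real.log (q j) ≤ p i₀ * Real.log (r i₀) :=
        mul_le_mul_of_nonneg_left (jensen i₀) (hp i₀)
      have h3 := (xlogx_bound (hp i₀) (hrpos i₀)).2 hpr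
      simp only [hTdef, h1]
      linarith
  have hsum : ∑ i, (p i - r i) < ∑ i, T i :=
    Finset.sum_lt_sum (fun i _ => hTw i) ⟨i₀, Finset.mem_univ i₀, hTs⟩
  rw [Finset.sum_sub_distrib, hp1, hsumr, sub_self] at hsum
  have : ∑ i, T i ≤ 0 := by
    have : ∑ i, T i = ∑ i, p i * Real.log (p i) - ∑ i, ∑ j, p i * c i j * Real.log (q j) := by
      rw [← Finset.sum_sub_distrib]
    rw [this]
    linarith
  linarith


lemma gibbs_energy_cross (μ : n → ℝ) {β βt : ℝ} (h : β ≤ βt) :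
    (∑ i, μ i * Real.exp (-βt * μ i)) * (∑ i, Real.exp (-β * μ i)) ≤
    (∑ i, μ i * Real.exp (-β * μ i)) * (∑ i, Real.exp (-βt * μ i)) := by
  set a : n → ℝ := fun i => Real.exp (-β * μ i) with ha
  set b : n → ℝ := fun i => Real.exp (-βt * μ i) with hb
  rw [Finset.sum_mul_sum, Finset.sum_mul_sum]
  rw [← sub_nonneg, ← Finset.sum_sub_distrib]
  simp_rw [← Finset.sum_sub_distrib]
  set F : n → n → ℝ := fun i j => μ i * a i * b j - μ i * b i * a j with hF
  have hsymm : ∑ i, ∑ j, F i j = ∑ i, ∑ j, F j i := by rw [Finset.sum_comm]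
  have hkey : ∀ i j, 0 ≤ F i j + F j i := by
    intro i j
    have e1 : F i j + F j i = (μ i - μ j) * (a i * b j - b i * a j) := by
      simp only [hF]; ring
    rw [e1]
    have hab : a i * b j - b i * a j = Real.exp (-β * μ i + -βt * μ j) -
        Real.exp (-βt * μ i + -β * μ j) := by
      simp only [ha, hb, Real.exp_add]
    rcases le_total (μ j) (μ i) with hle | hle
    · refine mul_nonneg (by linarith) ?_
      rw [hab, sub_nonneg, Real.exp_le_exp]
      nlinarith
    · have h1 : μ i - μ j ≤ 0 := by linarith
      have h2 : a i * b j - b i * a j ≤ 0 := by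
        rw [hab, sub_nonpos, Real.exp_le_exp]; nlinarith
      nlinarith [mul_nonneg (neg_nonneg.mpr h1) (neg_nonneg.mpr h2)]
  have h2 : 0 ≤ ∑ i, ∑ j, (F i j + F j i) :=
    Finset.sum_nonneg fun i _ => Finset.sum_nonneg fun j _ => hkey i j
  have h3 : ∑ i, ∑ j, (F i j + F j i) = (∑ i, ∑ j, F i j) + ∑ i, ∑ j, F j i := by
    simp_rw [Finset.sum_add_distrib]
  rw [h3, ← hsymm] at h2
  linarith

lemma conj_diag_isHermitian (M : Matrix n n ℂ) (v : n → ℝ) :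
    (M * Matrix.diagonal (fun i => (v i : ℂ)) * star M).IsHermitian := by
  have hd : (Matrix.diagonal (fun i => (v i : ℂ))).IsHermitian := by
    rw [Matrix.IsHermitian, Matrix.diagonal_conjTranspose]
    have : (star fun i => ((v i : ℝ) : ℂ)) = fun i => ((v i : ℝ) : ℂ) := by
      funext i; exact Complex.conj_ofReal (v i)
    rw [this]
  unfold Matrix.IsHermitian
  rw [Matrix.conjTranspose_mul, Matrix.conjTranspose_mul, hd.eq]
  simp [Matrix.star_eq_conjTranspose, Matrix.conjTranspose_conjTranspose, mul_assoc]

lemma gibbs_spectral (H : Matrix n n ℂ) (hH : H.IsHermitian) (β : ℝ) :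
    gibbs H β = (hH.eigenvectorUnitary : Matrix n n ℂ) *
      Matrix.diagonal (fun i => ((Real.exp (-β * hH.eigenvalues i) /
        ∑ j, Real.exp (-β * hH.eigenvalues j) : ℝ) : ℂ)) *
      star (hH.eigenvectorUnitary : Matrix n n ℂ) := by
  set U : Matrix n n ℂ := (hH.eigenvectorUnitary : Matrix n n ℂ) with hU
  have hUmem : U ∈ Matrix.unitaryGroup n ℂ := (hH.eigenvectorUnitary).2
  set μ : n → ℝ := hH.eigenvalues with hμ
  have hU1 : U * star U = 1 := Matrix.mem_unitaryGroup_iff.mp hUmem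
  have hU2 : star U * U = 1 := Matrix.mem_unitaryGroup_iff'.mp hUmem
  set Uu : (Matrix n n ℂ)ˣ := ⟨U, star U, hU1, hU2⟩ with hUu
  have hinv : (↑Uu⁻¹ : Matrix n n ℂ) = star U := rfl
  have hspec : H = U * Matrix.diagonal (fun i => (μ i : ℂ)) * star U := by
    have := hH.spectral_theorem
    simp only [Unitary.conjStarAlgAut_apply, Unitary.coe_star] at this
    exact this
  have hd : Matrix.diagonal (fun i => ((-β * μ i : ℝ) : ℂ))
      = -(β:ℂ) • Matrix.diagonal (fun i => (μ i : ℂ)) := by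
    have harg : (fun i => ((-β * μ i : ℝ) : ℂ)) = -(β:ℂ) • fun i => ((μ i : ℝ) : ℂ) := by
      funext i
      simp only [Pi.smul_apply, smul_eq_mul]
      push_cast
      ring
    rw [harg, Matrix.diagonal_smul]
  have hsmul : -(β : ℂ) • H = U * Matrix.diagonal (fun i => ((-β * μ i : ℝ) : ℂ)) * star U := by
    rw [hspec, hd, Matrix.mul_smul, Matrix.smul_mul]
  have hexp : NormedSpace.exp (-(β:ℂ) • H)
      = U * Matrix.diagonal (fun i => ((Real.exp (-β * μ i) : ℝ) : ℂ)) * star U := by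
    rw [hsmul]
    have h1 : U * Matrix.diagonal (fun i => ((-β * μ i : ℝ):ℂ)) * star U
        = (Uu : Matrix n n ℂ) * Matrix.diagonal (fun i => ((-β * μ i : ℝ):ℂ))
          * ((Uu⁻¹ : (Matrix n n ℂ)ˣ) : Matrix n n ℂ) := by rw [hinv]
    rw [h1, Matrix.exp_units_conj Uu, Matrix.exp_diagonal, hinv]
    have h2 : (NormedSpace.exp fun i => ((-β * μ i : ℝ):ℂ))
        = fun i => ((Real.exp (-β * μ i) : ℝ) : ℂ) := by
      rw [Pi.exp_def]
      funext i
      rw [← Complex.exp_eq_exp_ℂ]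
      exact (Complex.ofReal_exp _).symm
    rw [h2]
  have htr : (NormedSpace.exp (-(β:ℂ) • H)).trace
      = ((∑ j, Real.exp (-β * μ j) : ℝ) : ℂ) := by
    rw [hexp, Matrix.trace_mul_comm, ← mul_assoc, hU2, one_mul, Matrix.trace_diagonal]
    push_cast
    rfl
  have hZd : (((∑ j, Real.exp (-β * μ j) : ℝ)):ℂ)⁻¹ •
      Matrix.diagonal (fun i => ((Real.exp (-β * μ i) : ℝ):ℂ))
      = Matrix.diagonal (fun i => ((Real.exp (-β * μ i) /
          ∑ j, Real.exp (-β * μ j) : ℝ) : ℂ)) := by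
    have harg : (fun i => ((Real.exp (-β * μ i) / ∑ j, Real.exp (-β * μ j) : ℝ) : ℂ))
        = (((∑ j, Real.exp (-β * μ j) : ℝ)):ℂ)⁻¹ •
          fun i => ((Real.exp (-β * μ i) : ℝ) : ℂ) := by
      funext i
      simp only [Pi.smul_apply, smul_eq_mul]
      push_cast
      rw [inv_mul_eq_div]
    rw [harg, Matrix.diagonal_smul]
  show ((NormedSpace.exp (-(β : ℂ) • H)).trace)⁻¹ • NormedSpace.exp (-(β : ℂ) • H) = _
  rw [htr, hexp, ← Matrix.smul_mul, ← Matrix.mul_smul, hZd]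


lemma trace_DWDW (v w : n → ℝ) (W : Matrix n n ℂ) :
    ((Matrix.diagonal (fun i => (v i : ℂ)) * star W *
      Matrix.diagonal (fun i => (w i : ℂ)) * W).trace).re
    = ∑ a, ∑ b, v a * w b * Complex.normSq (W b a) := by
  rw [Matrix.trace]
  have he : ∀ a, (Matrix.diagonal (fun i => (v i : ℂ)) * star W *
      Matrix.diagonal (fun i => (w i : ℂ)) * W).diag a
      = ∑ b, ((v a * w b * Complex.normSq (W b a) : ℝ) : ℂ) := by
    intro a
    rw [Matrix.diag]
    rw [Matrix.mul_apply]
    refine Finset.sum_congr rfl fun b _ => ?_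
    rw [Matrix.mul_diagonal, Matrix.diagonal_mul, Matrix.star_apply]
    have : (W b a) * star (W b a) = (Complex.normSq (W b a) : ℂ) := Complex.mul_conj _
    push_cast
    rw [← this]
    ring
  rw [Finset.sum_congr rfl fun a _ => he a, Complex.re_sum]
  refine Finset.sum_congr rfl fun a _ => ?_
  rw [Complex.re_sum]
  refine Finset.sum_congr rfl fun b _ => ?_
  rw [Complex.ofReal_re]

end Helpers

open Kronecker in
/-- For a non-thermal state ρ, the intrinsic inverse temperature β(ρ)
(defined by matching entropy) is strictly larger than the spontaneous equilibration
inverse temperature β̃(ρ) (defined by matching energy). -/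
theorem intrinsic_beta_gt_spontaneous_beta {d : ℕ} (H : Matrix (Fin d) (Fin d) ℂ)
    (hH : H.IsHermitian) (hnd : ∃ i j, hH.eigenvalues i ≠ hH.eigenvalues j)
    (ρ : Matrix (Fin d) (Fin d) ℂ) (hρ : IsDensity ρ)
    (hnontherm : ∀ β : ℝ, ρ ≠ gibbs H β)
    (h0 : 0 < vnEntropy ρ) (h1 : vnEntropy ρ < Real.log d)
    (β βt : ℝ) (hβpos : 0 < β) (hβtpos : 0 < βt)
    (hβ : vnEntropy (gibbs H β) = vnEntropy ρ)
    (hβt : energy H (gibbs H βt) = energy H ρ) :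
    βt < β := by
  classical
  obtain ⟨i₀, -, -⟩ := hnd
  have hne : Nonempty (Fin d) := ⟨i₀⟩
  set μ : Fin d → ℝ := hH.eigenvalues with hμdef
  set U : Matrix (Fin d) (Fin d) ℂ := (hH.eigenvectorUnitary : Matrix (Fin d) (Fin d) ℂ)
    with hUdef
  have hUmem : U ∈ Matrix.unitaryGroup (Fin d) ℂ := (hH.eigenvectorUnitary).2
  have hU1 : U * star U = 1 := Matrix.mem_unitaryGroup_iff.mp hUmem
  have hU2 : star U * U = 1 := Matrix.mem_unitaryGroup_iff'.mp hUmem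
  have hspec : H = U * Matrix.diagonal (fun i => (μ i : ℂ)) * star U := by
    have := hH.spectral_theorem
    simp only [Unitary.conjStarAlgAut_apply, Unitary.coe_star] at this
    exact this
  set Z : ℝ → ℝ := fun b => ∑ j, Real.exp (-b * μ j) with hZdef
  have hZpos : ∀ b, 0 < Z b :=
    fun b => Finset.sum_pos (fun j _ => Real.exp_pos _) Finset.univ_nonempty
  set q : ℝ → Fin d → ℝ := fun b i => Real.exp (-b * μ i) / Z b with hqdef
  have hqpos : ∀ b i, 0 < q b i := fun b i => div_pos (Real.exp_pos _) (hZpos b)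
  have hqsum : ∀ b, ∑ i, q b i = 1 := by
    intro b
    simp only [hqdef]
    rw [← Finset.sum_div, div_self (hZpos b).ne']
  have hlogq : ∀ b j, Real.log (q b j) = -b * μ j - Real.log (Z b) := by
    intro b j
    simp only [hqdef]
    rw [Real.log_div (Real.exp_ne_zero _) (hZpos b).ne', Real.log_exp]
  have hGspec : ∀ b, gibbs H b = U * Matrix.diagonal (fun i => (q b i : ℂ)) * star U :=
    fun b => gibbs_spectral H hH b
  -- energy of Gibbs states
  have hEG : ∀ b, energy H (gibbs H b) = ∑ i, μ i * q b i := by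
    intro b
    have hHG : H * gibbs H b = U * (Matrix.diagonal (fun i => (μ i : ℂ)) *
        Matrix.diagonal (fun i => (q b i : ℂ))) * star U := by
      rw [hGspec b]
      nth_rewrite 1 [hspec]
      calc (U * Matrix.diagonal (fun i => (μ i : ℂ)) * star U) *
            (U * Matrix.diagonal (fun i => (q b i : ℂ)) * star U)
          = U * Matrix.diagonal (fun i => (μ i : ℂ)) * (star U * U) *
            Matrix.diagonal (fun i => (q b i : ℂ)) * star U := by
            simp only [Matrix.mul_assoc]
        _ = U * (Matrix.diagonal (fun i => (μ i : ℂ)) *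
            Matrix.diagonal (fun i => (q b i : ℂ))) * star U := by
            rw [hU2, mul_one]
            simp only [Matrix.mul_assoc]
    have htr : (H * gibbs H b).trace
        = (Matrix.diagonal (fun i => (μ i : ℂ)) *
          Matrix.diagonal (fun i => (q b i : ℂ))).trace := by
      rw [hHG, Matrix.trace_mul_comm, ← Matrix.mul_assoc, hU2, one_mul]
    rw [energy, htr, Matrix.diagonal_mul_diagonal, Matrix.trace_diagonal, Complex.re_sum]
    refine Finset.sum_congr rfl fun i _ => ?_
    rw [← Complex.ofReal_mul, Complex.ofReal_re]
  -- spectral data of ρ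
  have hρH : ρ.IsHermitian := hρ.1.1
  set p : Fin d → ℝ := hρH.eigenvalues with hpdef
  set V : Matrix (Fin d) (Fin d) ℂ := (hρH.eigenvectorUnitary : Matrix (Fin d) (Fin d) ℂ)
    with hVdef
  have hVmem : V ∈ Matrix.unitaryGroup (Fin d) ℂ := (hρH.eigenvectorUnitary).2
  have hV1 : V * star V = 1 := Matrix.mem_unitaryGroup_iff.mp hVmem
  have hV2 : star V * V = 1 := Matrix.mem_unitaryGroup_iff'.mp hVmem
  have hspecρ : ρ = V * Matrix.diagonal (fun i => (p i : ℂ)) * star V := by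
    have := hρH.spectral_theorem
    simp only [Unitary.conjStarAlgAut_apply, Unitary.coe_star] at this
    exact this
  have hp0 : ∀ i, 0 ≤ p i := fun i => hρ.1.eigenvalues_nonneg i
  have hptr : ∑ i, p i = 1 := by
    have htrρ : ρ.trace = ((∑ i, p i : ℝ) : ℂ) := by
      rw [hspecρ, Matrix.trace_mul_comm, ← Matrix.mul_assoc, hV2, one_mul,
        Matrix.trace_diagonal]
      push_cast
      rfl
    have := hρ.2
    rw [htrρ] at this
    exact_mod_cast this
  set W : Matrix (Fin d) (Fin d) ℂ := star V * U with hWdef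
  have hWmem : W ∈ Matrix.unitaryGroup (Fin d) ℂ :=
    Submonoid.mul_mem _ ((Unitary.star_mem_iff).mpr hVmem) hUmem
  set c : Fin d → Fin d → ℝ := fun i j => Complex.normSq (W i j) with hcdef
  -- energy of ρ
  have hEρ : energy H ρ = ∑ i, ∑ j, p i * c i j * μ j := by
    have hsw : star W = star U * V := by
      simp only [hWdef, StarMul.star_mul, star_star]
    have e2 : H * ρ = U * (Matrix.diagonal (fun i => (μ i : ℂ)) * star W *
        Matrix.diagonal (fun i => (p i : ℂ)) * W) * star U := by
      rw [hspec, hspecρ, hsw, hWdef]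
      simp only [Matrix.mul_assoc]
      rw [hU1, mul_one]
    have htr : (H * ρ).trace = (Matrix.diagonal (fun i => (μ i : ℂ)) * star W *
        Matrix.diagonal (fun i => (p i : ℂ)) * W).trace := by
      rw [e2, Matrix.trace_mul_comm, ← Matrix.mul_assoc, hU2, one_mul]
    rw [energy, htr, trace_DWDW]
    rw [Finset.sum_comm]
    refine Finset.sum_congr rfl fun i _ => Finset.sum_congr rfl fun j _ => ?_
    simp only [hcdef]
    ring
  -- entropies
  have hSρ : vnEntropy ρ = ∑ i, Real.negMulLog (p i) := by
    rw [vnEntropy, dif_pos hρH]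
  have hGH : (gibbs H β).IsHermitian := by
    rw [hGspec β]
    exact conj_diag_isHermitian U (q β)
  have hSG : vnEntropy (gibbs H β) = ∑ i, Real.negMulLog (q β i) := by
    rw [vnEntropy, dif_pos hGH]
    exact sum_f_eigenvalues hGH hUmem (q β) (hGspec β) Real.negMulLog
  -- entropy of Gibbs in terms of energy
  have hSγ : vnEntropy (gibbs H β) = β * (∑ i, μ i * q β i) + Real.log (Z β) := by
    rw [hSG]
    have hterm : ∀ i, Real.negMulLog (q β i)
        = β * (μ i * q β i) + Real.log (Z β) * q β i := by
      intro i
      rw [Real.negMulLog, hlogq β i]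
      ring
    rw [Finset.sum_congr rfl fun i _ => hterm i, Finset.sum_add_distrib,
      ← Finset.mul_sum, ← Finset.mul_sum, hqsum β, mul_one]
  -- contradiction setup
  by_contra hlt
  push_neg at hlt
  -- monotonicity: E(γ(βt)) ≤ E(γ(β))
  have hmono : energy H (gibbs H βt) ≤ energy H (gibbs H β) := by
    rw [hEG, hEG]
    have hEq : ∀ b, ∑ i, μ i * q b i = (∑ i, μ i * Real.exp (-b * μ i)) / Z b := by
      intro b
      rw [Finset.sum_div]
      refine Finset.sum_congr rfl fun i _ => ?_
      simp only [hqdef]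
      rw [mul_div_assoc]
    rw [hEq, hEq, div_le_div_iff₀ (hZpos βt) (hZpos β)]
    exact gibbs_energy_cross μ hlt
  have hED : energy H ρ ≤ energy H (gibbs H β) := hβt ▸ hmono
  -- Klein inequality input
  have hrowc : ∀ i, ∑ j, c i j = 1 := fun i => unitary_row_sum hWmem i
  have hcolc : ∀ j, ∑ i, c i j = 1 := fun j => unitary_col_sum hWmem j
  have hc0 : ∀ i j, 0 ≤ c i j := fun i j => Complex.normSq_nonneg _
  have hpc1 : ∑ i, ∑ j, p i * c i j = 1 := by
    calc ∑ i, ∑ j, p i * c i j = ∑ i, p i * ∑ j, c i j := by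
          refine Finset.sum_congr rfl fun i _ => (Finset.mul_sum _ _ _).symm
      _ = ∑ i, p i := by
          refine Finset.sum_congr rfl fun i _ => by rw [hrowc i, mul_one]
      _ = 1 := hptr
  have hApq : ∑ i, ∑ j, p i * c i j * Real.log (q β j)
      = -β * (∑ i, ∑ j, p i * c i j * μ j) - Real.log (Z β) := by
    have h1 : ∀ i j, p i * c i j * Real.log (q β j)
        = -β * (p i * c i j * μ j) - Real.log (Z β) * (p i * c i j) := by
      intro i j
      rw [hlogq β j]
      ring
    calc ∑ i, ∑ j, p i * c i j * Real.log (q β j)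
        = ∑ i, ∑ j, (-β * (p i * c i j * μ j) - Real.log (Z β) * (p i * c i j)) :=
          Finset.sum_congr rfl fun i _ => Finset.sum_congr rfl fun j _ => h1 i j
      _ = -β * (∑ i, ∑ j, p i * c i j * μ j)
          - Real.log (Z β) * (∑ i, ∑ j, p i * c i j) := by
          simp_rw [Finset.sum_sub_distrib, Finset.mul_sum]
      _ = -β * (∑ i, ∑ j, p i * c i j * μ j) - Real.log (Z β) := by
          rw [hpc1, mul_one]
  have hSsum : ∑ i, p i * Real.log (p i) = -vnEntropy ρ := by
    rw [hSρ]
    rw [← Finset.sum_neg_distrib]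
    refine Finset.sum_congr rfl fun i _ => ?_
    rw [Real.negMulLog]
    ring
  -- the relative entropy inequality hypothesis for klein_eq
  have hD : ∑ i, p i * Real.log (p i) ≤ ∑ i, ∑ j, p i * c i j * Real.log (q β j) := by
    rw [hSsum, hApq, ← hEρ]
    have h2 : β * energy H ρ ≤ β * (∑ i, μ i * q β i) := by
      have := hED
      rw [hEG β] at this
      exact mul_le_mul_of_nonneg_left this hβpos.le
    have h3 : vnEntropy ρ = β * (∑ i, μ i * q β i) + Real.log (Z β) := by
      rw [← hβ, hSγ]
    linarith
  have hpq := klein_eq hp0 (hqpos β) hc0 hrowc hcolc hptr (hqsum β) hD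
  -- reconstruct ρ = gibbs H β
  have hkey : Matrix.diagonal (fun i => (p i : ℂ)) * W
      = W * Matrix.diagonal (fun i => (q β i : ℂ)) := by
    ext i j
    rw [Matrix.diagonal_mul, Matrix.mul_diagonal]
    by_cases hw : W i j = 0
    · rw [hw, mul_zero, zero_mul]
    · have hcij : c i j ≠ 0 := by
        simp only [hcdef]
        exact fun h => hw (Complex.normSq_eq_zero.mp h)
      rw [hpq i j hcij, mul_comm]
  have hρG : ρ = gibbs H β := by
    rw [hGspec β, hspecρ]
    have e0 : star V = W * star U := by
      rw [hWdef]
      rw [Matrix.mul_assoc, hU1, mul_one]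
    calc V * Matrix.diagonal (fun i => (p i : ℂ)) * star V
        = V * (Matrix.diagonal (fun i => (p i : ℂ)) * W) * star U := by
          rw [e0]
          simp only [Matrix.mul_assoc]
      _ = V * (W * Matrix.diagonal (fun i => (q β i : ℂ))) * star U := by rw [hkey]
      _ = (V * star V) * U * Matrix.diagonal (fun i => (q β i : ℂ)) * star U := by
          rw [hWdef]
          simp only [Matrix.mul_assoc]
      _ = U * Matrix.diagonal (fun i => (q β i : ℂ)) * star U := by
          rw [hV1, one_mul]
  exact hnontherm β hρG

end
end

section
/- Work extraction with a thermal bath: for a state ρ_A ⊗ γ_B(β) on a bipartite system with non-interacting Hamiltonian, any entropy preserving transformation extracts work at most W ≤ F_β(ρ_A) - F_β(γ_A(β)), where F_β(σ) = E(σ) - β^{-1}S(σ) and γ_A(β), γ_B(β) are the Gibbs states of H_A, H_B at inverse temperature β. -/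
open Matrix BigOperators
open scoped ComplexOrder

noncomputable section

variable {n : Type*} [Fintype n] [DecidableEq n]

section Aux
open Polynomial
variable {m : Type*} [Fintype m] [DecidableEq m]


lemma charpoly_conj_unitary (U : Matrix.unitaryGroup m ℂ) (A : Matrix m m ℂ) :
    ((U : Matrix m m ℂ) * A * star (U : Matrix m m ℂ)).charpoly = A.charpoly := by
  have h1 : (U : Matrix m m ℂ) * star (U : Matrix m m ℂ) = 1 :=
    Matrix.mem_unitaryGroup_iff.mp U.2
  set Um := (C : ℂ →+* ℂ[X]).mapMatrix (U : Matrix m m ℂ) with hUm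
  set Vm := (C : ℂ →+* ℂ[X]).mapMatrix (star (U : Matrix m m ℂ)) with hVm
  have hUV : Um * Vm = 1 := by
    rw [hUm, hVm, ← RingHom.map_mul, h1, RingHom.map_one]
  have hchar : charmatrix ((U : Matrix m m ℂ) * A * star (U : Matrix m m ℂ))
      = Um * charmatrix A * Vm := by
    rw [charmatrix, charmatrix, mul_sub, sub_mul]
    congr 1
    · rw [mul_assoc, scalar_commute (X : ℂ[X]) (Commute.all _) Vm, ← mul_assoc, hUV, one_mul]
    · simp only [RingHom.mapMatrix_apply]
      rw [Matrix.map_mul, Matrix.map_mul, hUm, hVm]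
      rfl
  rw [Matrix.charpoly, hchar, det_mul, det_mul]
  rw [mul_comm, ← mul_assoc, ← det_mul]
  rw [show Vm * Um = 1 from by
    rw [hUm, hVm, ← RingHom.map_mul, Matrix.mem_unitaryGroup_iff'.mp U.2, RingHom.map_one],
    det_one, one_mul]
  rfl

lemma charpoly_diagonal_roots (d : m → ℂ) :
    (Matrix.diagonal d).charpoly.roots = Finset.univ.val.map d := by
  have hchar : charmatrix (Matrix.diagonal d) = Matrix.diagonal (fun i => (X : ℂ[X]) - C (d i)) := by
    rw [charmatrix, scalar_apply, RingHom.mapMatrix_apply, Matrix.diagonal_map (by simp),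
      Matrix.diagonal_sub]
  rw [Matrix.charpoly, hchar, det_diagonal]
  have : ∏ i, ((X : ℂ[X]) - C (d i)) = ((Finset.univ.val.map d).map fun a => (X : ℂ[X]) - C a).prod := by
    rw [Multiset.map_map]
    rfl
  rw [this, roots_multiset_prod_X_sub_C]

lemma eig_multiset {A : Matrix m m ℂ} (hA : A.IsHermitian)
    (U : Matrix.unitaryGroup m ℂ) (d : m → ℝ)
    (hAU : A = (U : Matrix m m ℂ) * Matrix.diagonal (fun i => (d i : ℂ)) * star (U : Matrix m m ℂ))
    (f : ℝ → ℝ) :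
    ∑ i, f (hA.eigenvalues i) = ∑ i, f (d i) := by
  have h1 : A.charpoly.roots = Finset.univ.val.map (fun i => (hA.eigenvalues i : ℂ)) := by
    conv_lhs => rw [hA.spectral_theorem, Unitary.conjStarAlgAut_apply]
    rw [show Matrix.diagonal (RCLike.ofReal ∘ hA.eigenvalues)
        = Matrix.diagonal (fun i => (hA.eigenvalues i : ℂ)) from rfl]
    rw [charpoly_conj_unitary, charpoly_diagonal_roots]
  have h2 : A.charpoly.roots = Finset.univ.val.map (fun i => (d i : ℂ)) := by
    rw [hAU, charpoly_conj_unitary, charpoly_diagonal_roots]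
  have h3 : Finset.univ.val.map hA.eigenvalues = Finset.univ.val.map d := by
    have := congrArg (Multiset.map Complex.re) (h1.symm.trans h2)
    simpa [Multiset.map_map, Function.comp] using this
  calc ∑ i, f (hA.eigenvalues i) = ((Finset.univ.val.map hA.eigenvalues).map f).sum := by
        rw [Multiset.map_map]; rfl
    _ = ((Finset.univ.val.map d).map f).sum := by rw [h3]
    _ = ∑ i, f (d i) := by rw [Multiset.map_map]; rfl


lemma conj_diag_herm (U : Matrix.unitaryGroup m ℂ) (d : m → ℝ) :
    ((U : Matrix m m ℂ) * Matrix.diagonal (fun i => (d i : ℂ)) * star (U : Matrix m m ℂ)).IsHermitian := by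
  have hD : (Matrix.diagonal (fun i => (d i : ℂ)))ᴴ = Matrix.diagonal (fun i => (d i : ℂ)) := by
    rw [Matrix.diagonal_conjTranspose,
      show (star fun i => ((d i : ℝ) : ℂ)) = (fun i => ((d i : ℝ) : ℂ)) from
        funext fun i => Complex.conj_ofReal _]
  show _ = _
  rw [Matrix.star_eq_conjTranspose, Matrix.conjTranspose_mul, Matrix.conjTranspose_mul,
    Matrix.conjTranspose_conjTranspose, hD, mul_assoc]

lemma trace_conj_diag (U : Matrix.unitaryGroup m ℂ) (D : Matrix m m ℂ) :
    ((U : Matrix m m ℂ) * D * star (U : Matrix m m ℂ)).trace = D.trace := by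
  rw [Matrix.trace_mul_cycle, Matrix.mem_unitaryGroup_iff'.mp U.2, one_mul]

lemma conj_diag_mul (U : Matrix.unitaryGroup m ℂ) (a b : m → ℂ) :
    ((U : Matrix m m ℂ) * Matrix.diagonal a * star (U : Matrix m m ℂ)) *
      ((U : Matrix m m ℂ) * Matrix.diagonal b * star (U : Matrix m m ℂ))
      = (U : Matrix m m ℂ) * Matrix.diagonal (fun i => a i * b i) * star (U : Matrix m m ℂ) := by
  have h1 : star (U : Matrix m m ℂ) * (U : Matrix m m ℂ) = 1 := Matrix.mem_unitaryGroup_iff'.mp U.2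
  have h2 : ∀ X : Matrix m m ℂ, star (U : Matrix m m ℂ) * ((U : Matrix m m ℂ) * X) = X := fun X => by
    rw [← mul_assoc, h1, one_mul]
  simp only [mul_assoc, h2]
  rw [← mul_assoc (Matrix.diagonal a), Matrix.diagonal_mul_diagonal]

lemma conj_diag_psd (U : Matrix.unitaryGroup m ℂ) (d : m → ℝ) (hd : ∀ i, 0 ≤ d i) :
    ((U : Matrix m m ℂ) * Matrix.diagonal (fun i => (d i : ℂ)) * star (U : Matrix m m ℂ)).PosSemidef := by
  have hD : (Matrix.diagonal (fun i => (d i : ℂ))).PosSemidef :=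
    Matrix.posSemidef_diagonal_iff.mpr fun i => Complex.zero_le_real.mpr (hd i)
  rw [Matrix.star_eq_conjTranspose]
  exact hD.mul_mul_conjTranspose_same (U : Matrix m m ℂ)

lemma exp_neg_beta (H : Matrix m m ℂ) (hH : H.IsHermitian) (β : ℝ) :
    NormedSpace.exp (-(β : ℂ) • H) = (hH.eigenvectorUnitary : Matrix m m ℂ)
      * Matrix.diagonal (fun i => ((Real.exp (-β * hH.eigenvalues i) : ℝ) : ℂ))
      * star (hH.eigenvectorUnitary : Matrix m m ℂ) := by
  have hsp : -(β : ℂ) • H = (hH.eigenvectorUnitary : Matrix m m ℂ)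
      * Matrix.diagonal (fun i => ((-β * hH.eigenvalues i : ℝ) : ℂ))
      * star (hH.eigenvectorUnitary : Matrix m m ℂ) := by
    conv_lhs => rw [hH.spectral_theorem, Unitary.conjStarAlgAut_apply]
    rw [← smul_mul_assoc, ← mul_smul_comm]
    congr 2
    ext i j
    by_cases h : i = j <;>
      simp [Matrix.smul_apply, Matrix.diagonal_apply, h, Function.comp] <;>
        push_cast <;> ring
  rw [hsp]
  have hU : ((Unitary.toUnits hH.eigenvectorUnitary : (Matrix m m ℂ)ˣ) : Matrix m m ℂ)
      = (hH.eigenvectorUnitary : Matrix m m ℂ) := rfl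
  have hUinv : (((Unitary.toUnits hH.eigenvectorUnitary)⁻¹ : (Matrix m m ℂ)ˣ) : Matrix m m ℂ)
      = star (hH.eigenvectorUnitary : Matrix m m ℂ) := rfl
  have h := Matrix.exp_units_conj (Unitary.toUnits hH.eigenvectorUnitary)
    (Matrix.diagonal (fun i => ((-β * hH.eigenvalues i : ℝ) : ℂ)))
  rw [hU, hUinv] at h
  rw [h, Matrix.exp_diagonal, Pi.exp_def]
  have hfun : (fun i => NormedSpace.exp (((-β * hH.eigenvalues i : ℝ) : ℂ)))
      = fun i => ((Real.exp (-β * hH.eigenvalues i) : ℝ) : ℂ) := by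
    funext i
    rw [← Complex.exp_eq_exp_ℂ, ← Complex.ofReal_exp]
  rw [hfun]


lemma vnEntropy_conj (U : Matrix.unitaryGroup m ℂ) (d : m → ℝ) {A : Matrix m m ℂ}
    (hAU : A = (U : Matrix m m ℂ) * Matrix.diagonal (fun i => (d i : ℂ)) * star (U : Matrix m m ℂ)) :
    vnEntropy A = ∑ i, Real.negMulLog (d i) := by
  have hA : A.IsHermitian := hAU ▸ conj_diag_herm U d
  rw [vnEntropy, dif_pos hA]
  exact eig_multiset hA U d hAU _

lemma trace_re_conj_mul (U : Matrix.unitaryGroup m ℂ) (a b : m → ℝ) {A B : Matrix m m ℂ}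
    (hA : A = (U : Matrix m m ℂ) * Matrix.diagonal (fun i => (a i : ℂ)) * star (U : Matrix m m ℂ))
    (hB : B = (U : Matrix m m ℂ) * Matrix.diagonal (fun i => (b i : ℂ)) * star (U : Matrix m m ℂ)) :
    ((A * B).trace).re = ∑ i, a i * b i := by
  rw [hA, hB, conj_diag_mul, trace_conj_diag, Matrix.trace_diagonal]
  rw [show ∑ i, ((a i : ℂ) * (b i : ℂ)) = ((∑ i, a i * b i : ℝ) : ℂ) by push_cast; rfl,
    Complex.ofReal_re]

lemma spectral_theorem' {A : Matrix m m ℂ} (hA : A.IsHermitian) :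
    A = (hA.eigenvectorUnitary : Matrix m m ℂ)
      * Matrix.diagonal (fun i => ((hA.eigenvalues i : ℝ) : ℂ))
      * star (hA.eigenvectorUnitary : Matrix m m ℂ) := by
  conv_lhs => rw [hA.spectral_theorem]
  rfl

lemma gibbs_eq (H : Matrix m m ℂ) (hH : H.IsHermitian) (β : ℝ) :
    gibbs H β = (hH.eigenvectorUnitary : Matrix m m ℂ)
      * Matrix.diagonal (fun i =>
          ((Real.exp (-β * hH.eigenvalues i) / (∑ j, Real.exp (-β * hH.eigenvalues j)) : ℝ) : ℂ))
      * star (hH.eigenvectorUnitary : Matrix m m ℂ) := by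
  have hZ : (NormedSpace.exp (-(β : ℂ) • H)).trace
      = (((∑ j, Real.exp (-β * hH.eigenvalues j) : ℝ)) : ℂ) := by
    rw [exp_neg_beta H hH β, trace_conj_diag, Matrix.trace_diagonal]
    push_cast; rfl
  rw [gibbs, hZ, exp_neg_beta H hH β, ← smul_mul_assoc, ← mul_smul_comm]
  congr 2
  ext i j
  by_cases h : i = j <;>
    simp [Matrix.smul_apply, Matrix.diagonal_apply, h, div_eq_inv_mul] <;> push_cast <;> ring

lemma gibbs_isDensity [Nonempty m] (H : Matrix m m ℂ) (hH : H.IsHermitian) (β : ℝ) :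
    IsDensity (gibbs H β) := by
  have hZpos : 0 < ∑ j, Real.exp (-β * hH.eigenvalues j) :=
    Finset.sum_pos (fun j _ => Real.exp_pos _) Finset.univ_nonempty
  constructor
  · rw [gibbs_eq H hH β]
    exact conj_diag_psd _ _ fun i => div_nonneg (Real.exp_pos _).le hZpos.le
  · rw [gibbs_eq H hH β, trace_conj_diag, Matrix.trace_diagonal]
    rw [show ∑ i, ((Real.exp (-β * hH.eigenvalues i) / (∑ j, Real.exp (-β * hH.eigenvalues j)) : ℝ) : ℂ)
        = (((∑ i, Real.exp (-β * hH.eigenvalues i) / (∑ j, Real.exp (-β * hH.eigenvalues j)) : ℝ)) : ℂ)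
      by push_cast; rfl]
    rw [← Finset.sum_div, div_self hZpos.ne']
    norm_num

lemma gibbs_identity [Nonempty m] (H : Matrix m m ℂ) (hH : H.IsHermitian) (β : ℝ) :
    vnEntropy (gibbs H β) = β * energy H (gibbs H β)
      + Real.log (∑ i, Real.exp (-β * hH.eigenvalues i)) := by
  set Z := ∑ i, Real.exp (-β * hH.eigenvalues i) with hZdef
  have hZpos : 0 < Z := Finset.sum_pos (fun j _ => Real.exp_pos _) Finset.univ_nonempty
  set q : m → ℝ := fun i => Real.exp (-β * hH.eigenvalues i) / Z with hqdef
  have hsumq : ∑ i, q i = 1 := by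
    rw [hqdef, ← Finset.sum_div, div_self hZpos.ne']
  have hS : vnEntropy (gibbs H β) = ∑ i, Real.negMulLog (q i) :=
    vnEntropy_conj hH.eigenvectorUnitary q (gibbs_eq H hH β)
  have hE : energy H (gibbs H β) = ∑ i, hH.eigenvalues i * q i :=
    trace_re_conj_mul hH.eigenvectorUnitary _ q (spectral_theorem' hH) (gibbs_eq H hH β)
  rw [hS, hE]
  have hterm : ∀ i, Real.negMulLog (q i) = β * (hH.eigenvalues i * q i) + Real.log Z * q i := by
    intro i
    rw [Real.negMulLog, hqdef]
    rw [Real.log_div (Real.exp_pos _).ne' hZpos.ne', Real.log_exp]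
    ring
  rw [Finset.sum_congr rfl fun i _ => hterm i, Finset.sum_add_distrib,
    ← Finset.mul_sum, ← Finset.mul_sum, hsumq, mul_one]

lemma key_log_ineq (lam q : ℝ) (hlam : 0 ≤ lam) (hq : 0 < q) :
    Real.negMulLog lam + lam * Real.log q ≤ q - lam := by
  rcases eq_or_lt_of_le hlam with h|h
  · rw [← h, Real.negMulLog, neg_zero, zero_mul, zero_mul, add_zero]
    linarith
  · have h1 := Real.log_le_sub_one_of_pos (div_pos hq h)
    rw [Real.log_div hq.ne' h.ne'] at h1
    have h2 : lam * (Real.log q - Real.log lam) ≤ lam * (q / lam - 1) :=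
      mul_le_mul_of_nonneg_left h1 h.le
    have h3 : lam * (q / lam) = q := by field_simp
    rw [Real.negMulLog]
    nlinarith [h2]

lemma real_klein [Nonempty m] (p : m → m → ℝ) (hp : ∀ i j, 0 ≤ p i j)
    (hrow : ∀ i, ∑ j, p i j = 1) (hcol : ∀ j, ∑ i, p i j = 1)
    (lam : m → ℝ) (hlam : ∀ j, 0 ≤ lam j) (hlam1 : ∑ j, lam j = 1)
    (e : m → ℝ) (β : ℝ) :
    ∑ j, Real.negMulLog (lam j)
      ≤ β * (∑ i, ∑ j, e i * (lam j * p i j)) + Real.log (∑ i, Real.exp (-β * e i)) := by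
  set Z := ∑ i, Real.exp (-β * e i) with hZdef
  have hZpos : 0 < Z := Finset.sum_pos (fun j _ => Real.exp_pos _) Finset.univ_nonempty
  set q : m → ℝ := fun i => Real.exp (-β * e i) / Z with hqdef
  have hqpos : ∀ i, 0 < q i := fun i => div_pos (Real.exp_pos _) hZpos
  have hsumq : ∑ i, q i = 1 := by rw [hqdef, ← Finset.sum_div, div_self hZpos.ne']
  have hlogq : ∀ i, Real.log (q i) = -(β * e i) - Real.log Z := by
    intro i
    rw [hqdef, Real.log_div (Real.exp_pos _).ne' hZpos.ne', Real.log_exp]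
    ring
  -- rewrite entropy as double sum
  have hS : ∑ j, Real.negMulLog (lam j) = ∑ i, ∑ j, p i j * Real.negMulLog (lam j) := by
    rw [Finset.sum_comm]
    refine Finset.sum_congr rfl fun j _ => ?_
    rw [← Finset.sum_mul, hcol j, one_mul]
  rw [hS]
  have hpoint : ∀ i j, p i j * Real.negMulLog (lam j)
      ≤ p i j * ((q i - lam j) + lam j * (β * e i + Real.log Z)) := by
    intro i j
    refine mul_le_mul_of_nonneg_left ?_ (hp i j)
    have := key_log_ineq (lam j) (q i) (hlam j) (hqpos i)
    rw [hlogq i] at this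
    nlinarith [this]
  have hsum : ∑ i, ∑ j, p i j * Real.negMulLog (lam j)
      ≤ ∑ i, ∑ j, p i j * ((q i - lam j) + lam j * (β * e i + Real.log Z)) :=
    Finset.sum_le_sum fun i _ => Finset.sum_le_sum fun j _ => hpoint i j
  refine hsum.trans (le_of_eq ?_)
  have hA : ∑ i, ∑ j, p i j * q i = 1 := by
    calc ∑ i, ∑ j, p i j * q i = ∑ i, q i := by
          refine Finset.sum_congr rfl fun i _ => ?_
          rw [← Finset.sum_mul, hrow i, one_mul]
      _ = 1 := hsumq
  have hB : ∑ i, ∑ j, p i j * lam j = 1 := by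
    rw [Finset.sum_comm]
    calc ∑ j, ∑ i, p i j * lam j = ∑ j, lam j := by
          refine Finset.sum_congr rfl fun j _ => ?_
          rw [← Finset.sum_mul, hcol j, one_mul]
      _ = 1 := hlam1
  have expand : ∀ i j, p i j * ((q i - lam j) + lam j * (β * e i + Real.log Z))
      = (p i j * q i - p i j * lam j)
        + (β * (e i * (lam j * p i j)) + Real.log Z * (p i j * lam j)) := by
    intro i j; ring
  simp only [expand]
  rw [Finset.sum_congr rfl fun i _ => Finset.sum_add_distrib,
    Finset.sum_add_distrib,
    Finset.sum_congr rfl fun i _ => Finset.sum_sub_distrib _ _,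
    Finset.sum_sub_distrib,
    Finset.sum_congr rfl (fun i _ => Finset.sum_add_distrib),
    Finset.sum_add_distrib]
  simp only [← Finset.mul_sum]
  rw [hA, hB]
  ring

lemma energy_double (e lam : m → ℝ) (W : Matrix m m ℂ) :
    ((Matrix.diagonal (fun i => (e i : ℂ))
        * (W * (Matrix.diagonal (fun j => (lam j : ℂ)) * star W))).trace).re
      = ∑ i, ∑ j, e i * (lam j * Complex.normSq (W i j)) := by
  have hterm : ∀ i, (Matrix.diagonal (fun i => (e i : ℂ))
      * (W * (Matrix.diagonal (fun j => (lam j : ℂ)) * star W))) i i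
      = ((∑ j, e i * (lam j * Complex.normSq (W i j)) : ℝ) : ℂ) := by
    intro i
    rw [Matrix.diagonal_mul, Matrix.mul_apply]
    have hj : ∀ j, W i j * (Matrix.diagonal (fun j => (lam j : ℂ)) * star W) j i
        = ((lam j * Complex.normSq (W i j) : ℝ) : ℂ) := by
      intro j
      rw [Matrix.diagonal_mul, Matrix.star_eq_conjTranspose, Matrix.conjTranspose_apply,
        mul_left_comm, Complex.star_def, Complex.mul_conj]
      push_cast
      ring
    rw [Finset.sum_congr rfl fun j _ => hj j]
    push_cast
    rw [Finset.mul_sum]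
  rw [show (Matrix.diagonal (fun i => (e i : ℂ))
        * (W * (Matrix.diagonal (fun j => (lam j : ℂ)) * star W))).trace
      = ∑ i, ((∑ j, e i * (lam j * Complex.normSq (W i j)) : ℝ) : ℂ) from
    Finset.sum_congr rfl fun i _ => hterm i]
  rw [Complex.re_sum]
  exact Finset.sum_congr rfl fun i _ => Complex.ofReal_re _

lemma klein_variational [Nonempty m] (H : Matrix m m ℂ) (hH : H.IsHermitian) (β : ℝ)
    (σ : Matrix m m ℂ) (hσ : IsDensity σ) :
    vnEntropy σ ≤ β * energy H σ + Real.log (∑ i, Real.exp (-β * hH.eigenvalues i)) := by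
  have hherm : σ.IsHermitian := hσ.1.1
  set U := (hH.eigenvectorUnitary : Matrix m m ℂ) with hUdef
  set V := (hherm.eigenvectorUnitary : Matrix m m ℂ) with hVdef
  have hU1 : U * star U = 1 := Matrix.mem_unitaryGroup_iff.mp hH.eigenvectorUnitary.2
  have hU2 : star U * U = 1 := Matrix.mem_unitaryGroup_iff'.mp hH.eigenvectorUnitary.2
  have hV1 : V * star V = 1 := Matrix.mem_unitaryGroup_iff.mp hherm.eigenvectorUnitary.2
  have hV2 : star V * V = 1 := Matrix.mem_unitaryGroup_iff'.mp hherm.eigenvectorUnitary.2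
  set W := star U * V with hWdef
  have hsW : star W = star V * U := by rw [hWdef, Matrix.star_mul, star_star]
  have hW1 : W * star W = 1 := by
    rw [hsW, hWdef, mul_assoc, ← mul_assoc V, hV1, one_mul, hU2]
  have hW2 : star W * W = 1 := by
    rw [hsW, hWdef, mul_assoc, ← mul_assoc U, hU1, one_mul, hV2]
  set p : m → m → ℝ := fun i j => Complex.normSq (W i j) with hpdef
  have hp : ∀ i j, 0 ≤ p i j := fun i j => Complex.normSq_nonneg _
  have hrow : ∀ i, ∑ j, p i j = 1 := by
    intro i
    have h := congrArg (fun M : Matrix m m ℂ => (M i i).re) hW1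
    simp only [Matrix.mul_apply, Matrix.star_eq_conjTranspose, Matrix.conjTranspose_apply,
      Matrix.one_apply_eq, Complex.one_re, ← Complex.star_def] at h
    simp only [Complex.star_def, Complex.mul_conj, Complex.re_sum, Complex.ofReal_re] at h
    exact h
  have hcol : ∀ j, ∑ i, p i j = 1 := by
    intro j
    have h := congrArg (fun M : Matrix m m ℂ => (M j j).re) hW2
    simp only [Matrix.mul_apply, Matrix.star_eq_conjTranspose, Matrix.conjTranspose_apply,
      Matrix.one_apply_eq, Complex.one_re] at h
    simp only [mul_comm, Complex.star_def, Complex.mul_conj, Complex.re_sum,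
      Complex.ofReal_re] at h
    exact h
  have hlam : ∀ j, 0 ≤ hherm.eigenvalues j := hσ.1.eigenvalues_nonneg
  have hlam1 : ∑ j, hherm.eigenvalues j = 1 := by
    have h := hσ.2
    rw [spectral_theorem' hherm, trace_conj_diag, Matrix.trace_diagonal] at h
    have h2 := congrArg Complex.re h
    simpa [Complex.re_sum] using h2
  have hS : vnEntropy σ = ∑ j, Real.negMulLog (hherm.eigenvalues j) := by
    rw [vnEntropy, dif_pos hherm]
  have hE : energy H σ = ∑ i, ∑ j, hH.eigenvalues i * (hherm.eigenvalues j * p i j) := by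
    have hprod : U * (Matrix.diagonal (fun i => ((hH.eigenvalues i : ℝ) : ℂ))
        * (W * (Matrix.diagonal (fun j => ((hherm.eigenvalues j : ℝ) : ℂ)) * star W))) * star U
        = H * σ := by
      conv_rhs => rw [spectral_theorem' hH, spectral_theorem' hherm]
      rw [hsW, hWdef]
      simp only [mul_assoc]
      rw [hU1]
      simp only [mul_one]
      rfl
    rw [energy, ← hprod, trace_conj_diag hH.eigenvectorUnitary]
    exact energy_double _ _ W
  rw [hS, hE]
  exact real_klein p hp hrow hcol _ hlam hlam1 _ β

open Kronecker

section Kron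
variable {a b : Type*} [Fintype a] [DecidableEq a] [Fintype b] [DecidableEq b]

lemma star_kronecker (A : Matrix a a ℂ) (B : Matrix b b ℂ) :
    star (A ⊗ₖ B) = star A ⊗ₖ star B := by
  ext p q
  simp [Matrix.star_eq_conjTranspose, Matrix.conjTranspose_apply, Matrix.kroneckerMap_apply,
    mul_comm]

noncomputable def kronUnitary (U₁ : Matrix.unitaryGroup a ℂ) (U₂ : Matrix.unitaryGroup b ℂ) :
    Matrix.unitaryGroup (a × b) ℂ :=
  ⟨(U₁ : Matrix a a ℂ) ⊗ₖ (U₂ : Matrix b b ℂ), by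
    constructor
    · rw [star_kronecker, ← Matrix.mul_kronecker_mul,
        Matrix.mem_unitaryGroup_iff'.mp U₁.2, Matrix.mem_unitaryGroup_iff'.mp U₂.2,
        Matrix.one_kronecker_one]
    · rw [star_kronecker, ← Matrix.mul_kronecker_mul,
        Matrix.mem_unitaryGroup_iff.mp U₁.2, Matrix.mem_unitaryGroup_iff.mp U₂.2,
        Matrix.one_kronecker_one]⟩

lemma kronUnitary_coe (U₁ : Matrix.unitaryGroup a ℂ) (U₂ : Matrix.unitaryGroup b ℂ) :
    (kronUnitary U₁ U₂ : Matrix (a × b) (a × b) ℂ) = (U₁ : Matrix a a ℂ) ⊗ₖ (U₂ : Matrix b b ℂ) :=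
  rfl

lemma kron_conj_diag (U₁ : Matrix.unitaryGroup a ℂ) (U₂ : Matrix.unitaryGroup b ℂ)
    (d₁ : a → ℝ) (d₂ : b → ℝ) :
    ((U₁ : Matrix a a ℂ) * Matrix.diagonal (fun i => (d₁ i : ℂ)) * star (U₁ : Matrix a a ℂ))
      ⊗ₖ ((U₂ : Matrix b b ℂ) * Matrix.diagonal (fun j => (d₂ j : ℂ)) * star (U₂ : Matrix b b ℂ))
    = (kronUnitary U₁ U₂ : Matrix (a × b) (a × b) ℂ)
        * Matrix.diagonal (fun p : a × b => ((d₁ p.1 * d₂ p.2 : ℝ) : ℂ))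
        * star (kronUnitary U₁ U₂ : Matrix (a × b) (a × b) ℂ) := by
  rw [kronUnitary_coe, star_kronecker, Matrix.mul_kronecker_mul, Matrix.mul_kronecker_mul,
    Matrix.diagonal_kronecker_diagonal]
  congr 2
  funext p
  push_cast
  rfl

end Kron


end Aux

open Kronecker in
/-- Work extraction with a thermal bath:
W ≤ F_β(ρ_A) - F_β(γ_A(β)) for any entropy preserving transformation of
ρ_A ⊗ γ_B(β), where F_β(σ) = E(σ) - β⁻¹ S(σ). -/
theorem work_extraction_with_bath {dA dB : ℕ}
    (HA : Matrix (Fin dA) (Fin dA) ℂ) (HB : Matrix (Fin dB) (Fin dB) ℂ)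
    (hA : HA.IsHermitian) (hB : HB.IsHermitian)
    (β : ℝ) (hβ : 0 < β)
    (ρA : Matrix (Fin dA) (Fin dA) ℂ) (hρA : IsDensity ρA)
    (ρ' : Matrix (Fin dA × Fin dB) (Fin dA × Fin dB) ℂ) (hρ' : IsDensity ρ')
    (hiso : vnEntropy ρ' = vnEntropy (ρA ⊗ₖ gibbs HB β)) :
    energy (HA ⊗ₖ (1 : Matrix (Fin dB) (Fin dB) ℂ)
          + (1 : Matrix (Fin dA) (Fin dA) ℂ) ⊗ₖ HB) (ρA ⊗ₖ gibbs HB β)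
      - energy (HA ⊗ₖ (1 : Matrix (Fin dB) (Fin dB) ℂ)
          + (1 : Matrix (Fin dA) (Fin dA) ℂ) ⊗ₖ HB) ρ'
      ≤ (energy HA ρA - β⁻¹ * vnEntropy ρA)
        - (energy HA (gibbs HA β) - β⁻¹ * vnEntropy (gibbs HA β)) := by
  -- nonemptiness
  have hAne : Nonempty (Fin dA) := by
    by_contra h
    rw [not_nonempty_iff] at h
    have h1 := hρA.2
    rw [Matrix.trace] at h1
    simp at h1
  have hBne : Nonempty (Fin dB) := by
    by_contra h
    rw [not_nonempty_iff] at h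
    have h1 := hρ'.2
    rw [Matrix.trace] at h1
    simp at h1
  -- basic data
  have hρherm : ρA.IsHermitian := hρA.1.1
  set γB := gibbs HB β with hγBdef
  have hγB : IsDensity γB := gibbs_isDensity HB hB β
  set ZA := ∑ i, Real.exp (-β * hA.eigenvalues i) with hZAdef
  set ZB := ∑ j, Real.exp (-β * hB.eigenvalues j) with hZBdef
  have hZApos : 0 < ZA := Finset.sum_pos (fun j _ => Real.exp_pos _) Finset.univ_nonempty
  have hZBpos : 0 < ZB := Finset.sum_pos (fun j _ => Real.exp_pos _) Finset.univ_nonempty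
  set lam := hρherm.eigenvalues with hlamdef
  set qB : Fin dB → ℝ := fun j => Real.exp (-β * hB.eigenvalues j) / ZB with hqBdef
  have hγBrep : γB = (hB.eigenvectorUnitary : Matrix (Fin dB) (Fin dB) ℂ)
      * Matrix.diagonal (fun j => ((qB j : ℝ) : ℂ))
      * star (hB.eigenvectorUnitary : Matrix (Fin dB) (Fin dB) ℂ) := gibbs_eq HB hB β
  have hsumlam : ∑ i, lam i = 1 := by
    have h := hρA.2
    rw [spectral_theorem' hρherm, trace_conj_diag, Matrix.trace_diagonal] at h
    have h2 := congrArg Complex.re h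
    simpa [Complex.re_sum] using h2
  have hsumqB : ∑ j, qB j = 1 := by
    rw [hqBdef, ← Finset.sum_div, div_self hZBpos.ne']
  -- representation of the product state
  set Kρ := kronUnitary hρherm.eigenvectorUnitary hB.eigenvectorUnitary with hKρdef
  have hXrep : ρA ⊗ₖ γB = (Kρ : Matrix (Fin dA × Fin dB) (Fin dA × Fin dB) ℂ)
      * Matrix.diagonal (fun p : Fin dA × Fin dB => ((lam p.1 * qB p.2 : ℝ) : ℂ))
      * star (Kρ : Matrix (Fin dA × Fin dB) (Fin dA × Fin dB) ℂ) := by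
    conv_lhs => rw [spectral_theorem' hρherm, hγBrep]
    exact kron_conj_diag _ _ lam qB
  -- entropy splitting
  have hSA : vnEntropy ρA = ∑ i, Real.negMulLog (lam i) := by
    rw [vnEntropy, dif_pos hρherm]
  have hSgB : vnEntropy γB = ∑ j, Real.negMulLog (qB j) :=
    vnEntropy_conj hB.eigenvectorUnitary qB hγBrep
  have hSsplit : vnEntropy (ρA ⊗ₖ γB) = vnEntropy ρA + vnEntropy γB := by
    rw [vnEntropy_conj Kρ _ hXrep, hSA, hSgB, Fintype.sum_prod_type]
    rw [Finset.sum_congr rfl fun i _ => Finset.sum_congr rfl fun j _ =>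
      Real.negMulLog_mul (lam i) (qB j)]
    rw [Finset.sum_congr rfl fun i _ => Finset.sum_add_distrib, Finset.sum_add_distrib]
    have h1 : ∑ i, ∑ j, qB j * Real.negMulLog (lam i) = ∑ i, Real.negMulLog (lam i) := by
      refine Finset.sum_congr rfl fun i _ => ?_
      rw [← Finset.sum_mul, hsumqB, one_mul]
    have h2 : ∑ i : Fin dA, ∑ j, lam i * Real.negMulLog (qB j)
        = (∑ i, lam i) * ∑ j, Real.negMulLog (qB j) := by
      rw [Finset.sum_mul]
      exact Finset.sum_congr rfl fun i _ => (Finset.mul_sum _ _ _).symm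
    rw [h1, h2, hsumlam, one_mul]
  -- energy splitting
  have hEsplit : energy (HA ⊗ₖ (1 : Matrix (Fin dB) (Fin dB) ℂ)
        + (1 : Matrix (Fin dA) (Fin dA) ℂ) ⊗ₖ HB) (ρA ⊗ₖ γB)
      = energy HA ρA + energy HB γB := by
    rw [energy, Matrix.add_mul, ← Matrix.mul_kronecker_mul, ← Matrix.mul_kronecker_mul,
      Matrix.trace_add, Matrix.trace_kronecker, Matrix.trace_kronecker,
      Matrix.one_mul, Matrix.one_mul, hγB.2, hρA.2, mul_one, one_mul, Complex.add_re]
    rfl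
  -- joint Hamiltonian representation
  set KH := kronUnitary hA.eigenvectorUnitary hB.eigenvectorUnitary with hKHdef
  have hjoint : HA ⊗ₖ (1 : Matrix (Fin dB) (Fin dB) ℂ)
        + (1 : Matrix (Fin dA) (Fin dA) ℂ) ⊗ₖ HB
      = (KH : Matrix (Fin dA × Fin dB) (Fin dA × Fin dB) ℂ)
        * Matrix.diagonal (fun p : Fin dA × Fin dB =>
            ((hA.eigenvalues p.1 + hB.eigenvalues p.2 : ℝ) : ℂ))
        * star (KH : Matrix (Fin dA × Fin dB) (Fin dA × Fin dB) ℂ) := by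
    have hone_A : (1 : Matrix (Fin dA) (Fin dA) ℂ)
        = (hA.eigenvectorUnitary : Matrix (Fin dA) (Fin dA) ℂ)
          * Matrix.diagonal (fun _ => ((1 : ℝ) : ℂ))
          * star (hA.eigenvectorUnitary : Matrix (Fin dA) (Fin dA) ℂ) := by
      rw [show Matrix.diagonal (fun _ : Fin dA => ((1 : ℝ) : ℂ)) = 1 by
        rw [← Matrix.diagonal_one]; norm_num, mul_one,
        Matrix.mem_unitaryGroup_iff.mp hA.eigenvectorUnitary.2]
    have hone_B : (1 : Matrix (Fin dB) (Fin dB) ℂ)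
        = (hB.eigenvectorUnitary : Matrix (Fin dB) (Fin dB) ℂ)
          * Matrix.diagonal (fun _ => ((1 : ℝ) : ℂ))
          * star (hB.eigenvectorUnitary : Matrix (Fin dB) (Fin dB) ℂ) := by
      rw [show Matrix.diagonal (fun _ : Fin dB => ((1 : ℝ) : ℂ)) = 1 by
        rw [← Matrix.diagonal_one]; norm_num, mul_one,
        Matrix.mem_unitaryGroup_iff.mp hB.eigenvectorUnitary.2]
    conv_lhs => rw [spectral_theorem' hA, spectral_theorem' hB, hone_A, hone_B]
    rw [kron_conj_diag hA.eigenvectorUnitary hB.eigenvectorUnitary _ _,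
      kron_conj_diag hA.eigenvectorUnitary hB.eigenvectorUnitary _ _]
    rw [← Matrix.add_mul, ← Matrix.mul_add, Matrix.diagonal_add]
    congr 2
    funext p
    push_cast
    ring
  have hjherm : (HA ⊗ₖ (1 : Matrix (Fin dB) (Fin dB) ℂ)
      + (1 : Matrix (Fin dA) (Fin dA) ℂ) ⊗ₖ HB).IsHermitian := by
    rw [hjoint]; exact conj_diag_herm KH _
  -- the Klein bound for ρ'
  have hKlein := klein_variational _ hjherm β ρ' hρ'
  have hZjoint : ∑ k, Real.exp (-β * hjherm.eigenvalues k) = ZA * ZB := by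
    rw [eig_multiset hjherm KH _ hjoint (fun x => Real.exp (-β * x))]
    rw [hZAdef, hZBdef, Finset.sum_mul_sum, Fintype.sum_prod_type]
    refine Finset.sum_congr rfl fun i _ => Finset.sum_congr rfl fun j _ => ?_
    rw [← Real.exp_add]
    ring_nf
  rw [hZjoint] at hKlein
  -- gibbs identities
  have hGA := gibbs_identity HA hA β
  have hGB := gibbs_identity HB hB β
  rw [← hZAdef] at hGA
  rw [← hZBdef, ← hγBdef] at hGB
  -- put everything together
  have hinv : β⁻¹ * β = 1 := inv_mul_cancel₀ hβ.ne'
  rw [hiso, hSsplit] at hKlein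
  set E' := energy (HA ⊗ₖ (1 : Matrix (Fin dB) (Fin dB) ℂ)
      + (1 : Matrix (Fin dA) (Fin dA) ℂ) ⊗ₖ HB) ρ' with hE'def
  have hlog : Real.log (ZA * ZB) = Real.log ZA + Real.log ZB :=
    Real.log_mul hZApos.ne' hZBpos.ne'
  rw [hlog] at hKlein
  have h3 := mul_le_mul_of_nonneg_left hKlein (inv_nonneg.mpr hβ.le)
  have e1 : β⁻¹ * (vnEntropy ρA + vnEntropy γB)
      = β⁻¹ * vnEntropy ρA + β⁻¹ * vnEntropy γB := by ring
  have e2 : β⁻¹ * (β * E' + (Real.log ZA + Real.log ZB))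
      = (β⁻¹ * β) * E' + β⁻¹ * Real.log ZA + β⁻¹ * Real.log ZB := by ring
  rw [e1, e2, hinv, one_mul] at h3
  have hGA' : β⁻¹ * vnEntropy (gibbs HA β)
      = energy HA (gibbs HA β) + β⁻¹ * Real.log ZA := by
    rw [hGA, mul_add, ← mul_assoc, hinv, one_mul]
  have hGB' : β⁻¹ * vnEntropy γB = energy HB γB + β⁻¹ * Real.log ZB := by
    rw [hGB, mul_add, ← mul_assoc, hinv, one_mul]
  rw [hEsplit]
  linarith


end
end
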